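/- arXiv:1202.6557 — 12 statements merged into one kernel-verified Lean document; each statement's English description precedes it below -/
import Mathlib

section
/- Let α, β > 0, r = √(α/β), and d ≥ 1. Let F be a nonnegative finite Borel measure on ℝ^d with ∫ |v|² dF(v) < ∞. Then F satisfies div_v{F (α − β|v|²)v} = 0 in the distributional sense, i.e. ∫_{ℝ^d} (α − β|v|²)(v · ∇φ(v)) dF(v) = 0 for every continuously differentiable compactly supported φ : ℝ^d → ℝ, if and only if the support of F is contained in {0} ∪ {v ∈ ℝ^d : |v| = r}. -/
open MeasureTheory Real Set
open scoped RealInnerProductSpace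

/-- For `ψ : ℝ → ℝ` with derivative `h` everywhere, the radial function
`v ↦ ψ (‖v‖²)` has `⟪v, ∇φ v⟫ = 2 * ‖v‖² * h (‖v‖²)`. -/
theorem inner_gradient_radial {d : ℕ} (ψ h : ℝ → ℝ) (hψ : ∀ t, HasDerivAt ψ (h t) t)
    (v : EuclideanSpace ℝ (Fin d)) :
    ⟪v, gradient (fun w => ψ (‖w‖ ^ 2)) v⟫ = 2 * ‖v‖ ^ 2 * h (‖v‖ ^ 2) := by
  have hq : HasFDerivAt (fun w : EuclideanSpace ℝ (Fin d) => ‖w‖ ^ 2)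
      (2 • (innerSL ℝ v)) v := (hasStrictFDerivAt_norm_sq v).hasFDerivAt
  have hφ : HasFDerivAt (fun w : EuclideanSpace ℝ (Fin d) => ψ (‖w‖ ^ 2))
      (h (‖v‖ ^ 2) • (2 • (innerSL ℝ v))) v := (hψ (‖v‖ ^ 2)).comp_hasFDerivAt v hq
  have this : gradient (fun w => ψ (‖w‖ ^ 2)) v
      = (InnerProductSpace.toDual ℝ _).symm (h (‖v‖ ^ 2) • (2 • (innerSL ℝ v))) := by
    rw [gradient, hφ.fderiv]
  rw [real_inner_comm, this, InnerProductSpace.toDual_symm_apply]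
  simp only [ContinuousLinearMap.smul_apply, innerSL_apply_apply,
    smul_eq_mul, real_inner_self_eq_norm_sq]
  ring

/-- auxiliary polynomial `g t = t (α - β t)` -/
noncomputable def gfun (α β t : ℝ) : ℝ := t * (α - β * t)

/-- continuous cutoff, equal to `1` for `t ≤ n` and `0` for `t ≥ n + 1`. -/
noncomputable def chi (n : ℕ) (t : ℝ) : ℝ := max 0 (min 1 ((n : ℝ) + 1 - t))

theorem chi_continuous (n : ℕ) : Continuous (chi n) := by
  unfold chi; fun_prop

theorem chi_nonneg (n : ℕ) (t : ℝ) : 0 ≤ chi n t := le_max_left _ _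

theorem chi_eq_zero (n : ℕ) {t : ℝ} (ht : (n : ℝ) + 1 ≤ t) : chi n t = 0 := by
  unfold chi
  rw [max_eq_left]
  exact le_trans (min_le_right _ _) (by linarith)

theorem chi_eq_one (n : ℕ) {t : ℝ} (ht : t ≤ (n : ℝ)) : chi n t = 1 := by
  unfold chi
  rw [min_eq_left (by linarith), max_eq_right zero_le_one]

/-- Let `α, β > 0`, `r = √(α/β)`, `d ≥ 1`, and let `F` be a
nonnegative finite Borel measure on `ℝ^d` with finite second moment. Then `F`
satisfies `div_v{F (α − β|v|²)v} = 0` in the distributional sense (i.e.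
`∫ (α − β|v|²)(v · ∇φ(v)) dF(v) = 0` for every `φ ∈ C¹_c`) if and only if the
support of `F` is contained in `{0} ∪ {|v| = r}` (equivalently, the complement
of this closed set is `F`-null). -/
theorem stmt0 (d : ℕ) (hd : 1 ≤ d) (α β : ℝ) (hα : 0 < α) (hβ : 0 < β)
    (r : ℝ) (hr : r = Real.sqrt (α / β))
    (F : Measure (EuclideanSpace ℝ (Fin d))) [IsFiniteMeasure F]
    (hmom : Integrable (fun v => ‖v‖ ^ 2) F) :
    (∀ φ : EuclideanSpace ℝ (Fin d) → ℝ, ContDiff ℝ 1 φ → HasCompactSupport φ →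
        ∫ v, (α - β * ‖v‖ ^ 2) * ⟪v, gradient φ v⟫ ∂F = 0) ↔
      F (({0} ∪ {v : EuclideanSpace ℝ (Fin d) | ‖v‖ = r})ᶜ) = 0 := by
  set E := EuclideanSpace ℝ (Fin d)
  have hr2 : r ^ 2 = α / β := by
    rw [hr, Real.sq_sqrt (div_nonneg hα.le hβ.le)]
  constructor
  · intro htest
    -- continuous functions
    have hgcont : Continuous (gfun α β) := by unfold gfun; fun_prop
    have hhcont : ∀ n : ℕ, Continuous (fun t => gfun α β t * chi n t) :=
      fun n => hgcont.mul (chi_continuous n)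
    -- for each n, the set where the test integrand is nonzero is null
    have key : ∀ n : ℕ,
        F {v : E | gfun α β (‖v‖ ^ 2) ^ 2 * chi n (‖v‖ ^ 2) ≠ 0} = 0 := by
      intro n
      set h : ℝ → ℝ := fun t => gfun α β t * chi n t with hh
      set ψ : ℝ → ℝ := fun t => ∫ s in ((n : ℝ) + 1)..t, h s with hψdef
      have hder : ∀ t, HasDerivAt ψ (h t) t := fun t =>
        ((hhcont n).integral_hasStrictDerivAt ((n : ℝ) + 1) t).hasDerivAt
      have hψc : ContDiff ℝ 1 ψ := by
        rw [contDiff_one_iff_deriv]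
        refine ⟨fun t => (hder t).differentiableAt, ?_⟩
        have : deriv ψ = h := funext fun t => (hder t).deriv
        rw [this]; exact hhcont n
      have hψ0 : ∀ t : ℝ, (n : ℝ) + 1 ≤ t → ψ t = 0 := by
        intro t ht
        have : EqOn h 0 (Set.uIcc ((n : ℝ) + 1) t) := by
          intro s hs
          rw [Set.uIcc_of_le ht] at hs
          have : chi n s = 0 := chi_eq_zero n hs.1
          simp [hh, this]
        rw [hψdef]
        simp only
        rw [intervalIntegral.integral_congr this]
        simp
      set φ : E → ℝ := fun v => ψ (‖v‖ ^ 2) with hφdef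
      have hφc : ContDiff ℝ 1 φ := hψc.comp (contDiff_norm_sq ℝ)
      have hφsupp : HasCompactSupport φ := by
        refine HasCompactSupport.intro (isCompact_closedBall (0 : E)
          (Real.sqrt ((n : ℝ) + 1))) fun x hx => ?_
        simp only [Metric.mem_closedBall, dist_zero_right, not_le] at hx
        have h2 : Real.sqrt ((n : ℝ) + 1) ^ 2 = (n : ℝ) + 1 :=
          Real.sq_sqrt (by positivity)
        exact hψ0 _ (by nlinarith [norm_nonneg x, Real.sqrt_nonneg ((n : ℝ) + 1)])
      have hint := htest φ hφc hφsupp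
      have hrw : (fun v : E => (α - β * ‖v‖ ^ 2) * ⟪v, gradient φ v⟫)
          = fun v : E => 2 * (gfun α β (‖v‖ ^ 2) ^ 2 * chi n (‖v‖ ^ 2)) := by
        funext v
        rw [hφdef, inner_gradient_radial ψ h hder v]
        simp only [hh, gfun]
        ring
      rw [hrw] at hint
      -- integrability of the nonnegative integrand
      set f : E → ℝ := fun v => gfun α β (‖v‖ ^ 2) ^ 2 * chi n (‖v‖ ^ 2) with hfdef
      have hfc : Continuous f := by
        apply Continuous.mul
        · exact ((hgcont.comp (continuous_norm.pow 2)).pow 2)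
        · exact (chi_continuous n).comp (continuous_norm.pow 2)
      have hfsupp : HasCompactSupport f := by
        refine HasCompactSupport.intro (isCompact_closedBall (0 : E)
          (Real.sqrt ((n : ℝ) + 1))) fun x hx => ?_
        simp only [Metric.mem_closedBall, dist_zero_right, not_le] at hx
        have h2 : Real.sqrt ((n : ℝ) + 1) ^ 2 = (n : ℝ) + 1 :=
          Real.sq_sqrt (by positivity)
        have : chi n (‖x‖ ^ 2) = 0 := chi_eq_zero n
          (by nlinarith [norm_nonneg x, Real.sqrt_nonneg ((n : ℝ) + 1)])
        simp [hfdef, this]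
      have hfint : Integrable f F := hfc.integrable_of_hasCompactSupport hfsupp
      have hfnn : 0 ≤ f := fun v => mul_nonneg (sq_nonneg _) (chi_nonneg n _)
      rw [integral_const_mul] at hint
      have hint0 : ∫ v, f v ∂F = 0 := by linarith
      have hae : f =ᵐ[F] 0 := (integral_eq_zero_iff_of_nonneg hfnn hfint).mp hint0
      exact ae_iff.mp hae
    -- conclude
    apply measure_mono_null _ (measure_iUnion_null (fun n => key n))
    intro v hv
    simp only [Set.mem_compl_iff, Set.mem_union, Set.mem_singleton_iff,
      Set.mem_setOf_eq, not_or] at hv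
    obtain ⟨hv0, hvr⟩ := hv
    set n : ℕ := ⌈‖v‖ ^ 2⌉₊ with hn
    refine Set.mem_iUnion.mpr ⟨n, ?_⟩
    show gfun α β (‖v‖ ^ 2) ^ 2 * chi n (‖v‖ ^ 2) ≠ 0
    have hchi : chi n (‖v‖ ^ 2) = 1 := chi_eq_one n (Nat.le_ceil _)
    rw [hchi, mul_one]
    apply pow_ne_zero
    unfold gfun
    apply mul_ne_zero
    · have : 0 < ‖v‖ := norm_pos_iff.mpr hv0
      positivity
    · intro hcontra
      apply hvr
      have ht : ‖v‖ ^ 2 = α / β := by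
        field_simp at hcontra ⊢
        linarith
      rw [hr, ← ht, Real.sqrt_sq (norm_nonneg v)]
  · intro hnull φ hφ hφsupp
    have hae : ∀ᵐ v ∂F, v ∈ ({0} ∪ {v : E | ‖v‖ = r}) := by
      rw [ae_iff]
      convert hnull using 2
      rfl
    rw [← integral_zero E ℝ (μ := F)]
    apply integral_congr_ae
    filter_upwards [hae] with v hv
    rcases hv with hv | hv
    · simp only [Set.mem_singleton_iff] at hv
      subst hv
      simp
    · simp only [Set.mem_setOf_eq] at hv
      have : α - β * ‖v‖ ^ 2 = 0 := by
        rw [hv, hr2]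
        field_simp
        try ring
      rw [this, zero_mul]
end

section
/- Fix α, β > 0 and set r = √(α/β). Let A < 0, and for 0 < ε < 2αr/(|A|·3√3) let ρ₁^ε < ρ₂^ε denote the two zeros on [0, ∞) of λ^ε(ρ) = εA + (α − βρ²)ρ. Then lim_{ε→0} ρ₁^ε/ε = |A|/α and lim_{ε→0} (r − ρ₂^ε)/ε = |A|/(2α). -/
open Real Set Filter Topology

/-- Fix `α, β > 0`, `r = √(α/β)`, `A < 0`. If for each
`0 < ε < 2αr/(|A|·3√3)`, `ρ₁ ε < ρ₂ ε` are the two zeros on `[0,∞)` of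
`λ^ε(ρ) = εA + (α − βρ²)ρ` (with `0 < ρ₁ ε < r/√3 < ρ₂ ε < r`), then
`ρ₁^ε/ε → |A|/α` and `(r − ρ₂^ε)/ε → |A|/(2α)` as `ε → 0⁺`. -/
theorem stmt4 (α β A : ℝ) (hα : 0 < α) (hβ : 0 < β) (hA : A < 0)
    (r : ℝ) (hr : r = Real.sqrt (α / β))
    (ρ₁ ρ₂ : ℝ → ℝ)
    (hzeros : ∀ ε, 0 < ε → ε < 2 * α * r / (|A| * (3 * Real.sqrt 3)) →
      0 < ρ₁ ε ∧ ρ₁ ε < r / Real.sqrt 3 ∧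
      r / Real.sqrt 3 < ρ₂ ε ∧ ρ₂ ε < r ∧
      ε * A + (α - β * (ρ₁ ε) ^ 2) * ρ₁ ε = 0 ∧
      ε * A + (α - β * (ρ₂ ε) ^ 2) * ρ₂ ε = 0) :
    Tendsto (fun ε => ρ₁ ε / ε) (𝓝[>] 0) (𝓝 (|A| / α)) ∧
    Tendsto (fun ε => (r - ρ₂ ε) / ε) (𝓝[>] 0) (𝓝 (|A| / (2 * α))) := by
  have hAabs : 0 < |A| := abs_pos.mpr hA.ne
  have habsA : |A| = -A := abs_of_neg hA
  have hrpos : 0 < r := by rw [hr]; exact Real.sqrt_pos.mpr (by positivity)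
  have hr2 : r ^ 2 = α / β := by rw [hr]; exact Real.sq_sqrt (by positivity)
  have hβr2 : β * r ^ 2 = α := by rw [hr2]; field_simp
  have hs : (0:ℝ) < Real.sqrt 3 := Real.sqrt_pos.mpr (by norm_num)
  have hs2 : (Real.sqrt 3) ^ 2 = 3 := Real.sq_sqrt (by norm_num)
  set δ := 2 * α * r / (|A| * (3 * Real.sqrt 3)) with hδ
  have hδpos : 0 < δ := by positivity
  have hmem : Ioo (0:ℝ) δ ∈ 𝓝[>] (0:ℝ) :=
    Ioo_mem_nhdsGT_of_mem ⟨le_refl 0, hδpos⟩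
  -- Facts for ρ₁
  have key1 : ∀ ε ∈ Ioo (0:ℝ) δ,
      ρ₁ ε / ε = |A| / (α - β * (ρ₁ ε) ^ 2) ∧
      0 ≤ ρ₁ ε ∧ ρ₁ ε ≤ ε * (3 * |A| / (2 * α)) := by
    intro ε hε
    obtain ⟨h1, h2, _, _, h5, _⟩ := hzeros ε hε.1 hε.2
    have heq : (α - β * (ρ₁ ε) ^ 2) * ρ₁ ε = ε * |A| := by
      rw [habsA]; linarith
    have hms : ρ₁ ε * Real.sqrt 3 < r := (lt_div_iff₀ hs).mp h2
    have hden : 2 * α / 3 < α - β * (ρ₁ ε) ^ 2 := by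
      have hsq := mul_self_lt_mul_self (by positivity : (0:ℝ) ≤ ρ₁ ε * Real.sqrt 3) hms
      have h1' : 3 * (ρ₁ ε) ^ 2 < r ^ 2 := by nlinarith [hs2]
      nlinarith [mul_lt_mul_of_pos_left h1' hβ]
    have hdenpos : 0 < α - β * (ρ₁ ε) ^ 2 := by linarith
    refine ⟨?_, h1.le, ?_⟩
    · rw [div_eq_div_iff hε.1.ne' hdenpos.ne']
      linear_combination heq
    · have hmul : ρ₁ ε * (2 * α) ≤ ε * 3 * |A| := by
        nlinarith [mul_lt_mul_of_pos_left hden h1]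
      calc ρ₁ ε ≤ ε * 3 * |A| / (2 * α) := (le_div_iff₀ (by positivity)).mpr hmul
        _ = ε * (3 * |A| / (2 * α)) := by ring
  -- Facts for ρ₂
  have key2 : ∀ ε ∈ Ioo (0:ℝ) δ,
      (r - ρ₂ ε) / ε = |A| / (β * (r + ρ₂ ε) * ρ₂ ε) ∧
      0 ≤ r - ρ₂ ε ∧ r - ρ₂ ε ≤ ε * (Real.sqrt 3 * |A| / α) := by
    intro ε hε
    obtain ⟨_, _, h3, h4, _, h6⟩ := hzeros ε hε.1 hε.2
    have hρ₂pos : 0 < ρ₂ ε := lt_trans (by positivity) h3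
    have hms : r < ρ₂ ε * Real.sqrt 3 := (div_lt_iff₀ hs).mp h3
    have heq : (r - ρ₂ ε) * (β * (r + ρ₂ ε) * ρ₂ ε) = ε * |A| := by
      rw [habsA]
      linear_combination h6 + ρ₂ ε * hβr2
    have hdenpos : 0 < β * (r + ρ₂ ε) * ρ₂ ε := by positivity
    have hdens : α ≤ β * (r + ρ₂ ε) * ρ₂ ε * Real.sqrt 3 := by
      have t1 : β * r * r < β * r * (ρ₂ ε * Real.sqrt 3) :=
        mul_lt_mul_of_pos_left hms (mul_pos hβ hrpos)
      have t2 : (0:ℝ) ≤ β * ρ₂ ε ^ 2 * Real.sqrt 3 := by positivity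
      nlinarith [hβr2]
    refine ⟨?_, by linarith, ?_⟩
    · rw [div_eq_div_iff hε.1.ne' hdenpos.ne']
      linear_combination heq
    · have heq3 : (r - ρ₂ ε) * (β * (r + ρ₂ ε) * ρ₂ ε * Real.sqrt 3)
          = ε * |A| * Real.sqrt 3 := by linear_combination Real.sqrt 3 * heq
      have hmul : (r - ρ₂ ε) * α ≤ ε * (Real.sqrt 3 * |A|) := by
        have t := mul_le_mul_of_nonneg_left hdens (sub_nonneg.mpr h4.le)
        linarith [t, heq3]
      calc r - ρ₂ ε ≤ ε * (Real.sqrt 3 * |A|) / α := (le_div_iff₀ hα).mpr hmul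
        _ = ε * (Real.sqrt 3 * |A| / α) := by ring
  -- limits of ρ₁ and ρ₂
  have hC1 : Tendsto (fun ε : ℝ => ε * (3 * |A| / (2 * α))) (𝓝[>] 0) (𝓝 0) := by
    have := (tendsto_id.mono_left nhdsWithin_le_nhds :
      Tendsto id (𝓝[>] (0:ℝ)) (𝓝 0)).mul_const (3 * |A| / (2 * α))
    simpa using this
  have hρ₁0 : Tendsto ρ₁ (𝓝[>] 0) (𝓝 0) := by
    refine tendsto_of_tendsto_of_tendsto_of_le_of_le' tendsto_const_nhds hC1 ?_ ?_
    · filter_upwards [hmem] with ε hε using (key1 ε hε).2.1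
    · filter_upwards [hmem] with ε hε using (key1 ε hε).2.2
  have hC2 : Tendsto (fun ε : ℝ => ε * (Real.sqrt 3 * |A| / α)) (𝓝[>] 0) (𝓝 0) := by
    have := (tendsto_id.mono_left nhdsWithin_le_nhds :
      Tendsto id (𝓝[>] (0:ℝ)) (𝓝 0)).mul_const (Real.sqrt 3 * |A| / α)
    simpa using this
  have hd2 : Tendsto (fun ε => r - ρ₂ ε) (𝓝[>] 0) (𝓝 0) := by
    refine tendsto_of_tendsto_of_tendsto_of_le_of_le' tendsto_const_nhds hC2 ?_ ?_
    · filter_upwards [hmem] with ε hε using (key2 ε hε).2.1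
    · filter_upwards [hmem] with ε hε using (key2 ε hε).2.2
  have hρ₂r : Tendsto ρ₂ (𝓝[>] 0) (𝓝 r) := by
    have := (tendsto_const_nhds (x := r)).sub hd2
    simpa using this
  constructor
  · -- first limit
    have hden : Tendsto (fun ε => α - β * (ρ₁ ε) ^ 2) (𝓝[>] 0) (𝓝 α) := by
      have := (tendsto_const_nhds (x := α)).sub
        ((tendsto_const_nhds (x := β)).mul (hρ₁0.pow 2))
      simpa using this
    have hlim : Tendsto (fun ε => |A| / (α - β * (ρ₁ ε) ^ 2)) (𝓝[>] 0) (𝓝 (|A| / α)) :=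
      tendsto_const_nhds.div hden hα.ne'
    refine hlim.congr' ?_
    filter_upwards [hmem] with ε hε using ((key1 ε hε).1).symm
  · -- second limit
    have hden : Tendsto (fun ε => β * (r + ρ₂ ε) * ρ₂ ε) (𝓝[>] 0)
        (𝓝 (β * (r + r) * r)) :=
      (((tendsto_const_nhds (x := β)).mul
        ((tendsto_const_nhds (x := r)).add hρ₂r)).mul hρ₂r)
    have hdval : β * (r + r) * r = 2 * α := by linear_combination 2 * hβr2
    rw [hdval] at hden
    have hlim : Tendsto (fun ε => |A| / (β * (r + ρ₂ ε) * ρ₂ ε)) (𝓝[>] 0)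
        (𝓝 (|A| / (2 * α))) :=
      tendsto_const_nhds.div hden (by positivity)
    refine hlim.congr' ?_
    filter_upwards [hmem] with ε hε using ((key2 ε hε).1).symm
end

section
/- Fix α, β > 0 and set r = √(α/β). Let ε > 0, A ≥ 0, and let V : [0, ∞) → ℝ^d be an (ε, A)-characteristic velocity. Then for every t ≥ 0, |V(t)| ≤ max{|V(0)|, ρ₃^ε(A)}. -/
open Real Set

/-- Fix `α, β > 0`, `r = √(α/β)`, `ε > 0`, `A ≥ 0`. If
`V : [0,∞) → ℝ^d` is a C¹ curve with `|V′(t) − (1/ε)(α − β|V(t)|²)V(t)| ≤ A`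
for all `t ≥ 0` (an `(ε,A)`-characteristic velocity), and `ρ₃` is the zero in
`[r,∞)` of `ρ ↦ εA + (α − βρ²)ρ`, then `|V(t)| ≤ max{|V(0)|, ρ₃}` for all `t ≥ 0`. -/
theorem stmt7 (d : ℕ) (α β ε A : ℝ) (hα : 0 < α) (hβ : 0 < β) (hε : 0 < ε)
    (hA : 0 ≤ A) (r : ℝ) (hr : r = Real.sqrt (α / β))
    (V V' : ℝ → EuclideanSpace ℝ (Fin d))
    (hV'cont : ContinuousOn V' (Set.Ici 0))
    (hVderiv : ∀ t ∈ Set.Ici (0:ℝ), HasDerivWithinAt V (V' t) (Set.Ici 0) t)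
    (hchar : ∀ t ∈ Set.Ici (0:ℝ),
      ‖V' t - ((1 / ε) * (α - β * ‖V t‖ ^ 2)) • V t‖ ≤ A)
    (ρ₃ : ℝ) (hρ₃r : r ≤ ρ₃) (hρ₃ : ε * A + (α - β * ρ₃ ^ 2) * ρ₃ = 0) :
    ∀ t ∈ Set.Ici (0:ℝ), ‖V t‖ ≤ max ‖V 0‖ ρ₃ := by
  intro t ht
  have hr0 : 0 < r := by
    rw [hr]; exact Real.sqrt_pos.2 (div_pos hα hβ)
  have hr2 : β * r ^ 2 = α := by
    rw [hr, Real.sq_sqrt (le_of_lt (div_pos hα hβ))]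
    field_simp
  have hρ₃pos : 0 < ρ₃ := lt_of_lt_of_le hr0 hρ₃r
  set M := max ‖V 0‖ ρ₃ with hM
  have hρ₃M : ρ₃ ≤ M := le_max_right _ _
  have hMpos : 0 < M := lt_of_lt_of_le hρ₃pos hρ₃M
  have hVcont : ContinuousOn V (Set.Ici 0) :=
    fun s hs => (hVderiv s hs).continuousWithinAt
  refine le_of_forall_pos_le_add (fun δ hδ => ?_)
  set ρ := M + δ with hρdef
  have hρpos : 0 < ρ := by positivity
  have hρgt : ρ₃ < ρ := lt_of_le_of_lt hρ₃M (by simp [hρdef, hδ])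
  -- the cubic is strictly negative at ρ
  have hβρ₃ : α ≤ β * ρ₃ ^ 2 := by nlinarith
  have hfac : 0 < β * (ρ ^ 2 + ρ * ρ₃ + ρ₃ ^ 2) - α := by
    nlinarith [mul_pos hβ (mul_pos hρpos hρ₃pos), mul_nonneg hβ.le (sq_nonneg ρ)]
  have hcubic : ε * A + (α - β * ρ ^ 2) * ρ < 0 := by
    nlinarith [mul_pos (sub_pos.2 hρgt) hfac]
  -- apply the fencing theorem to φ = ‖V‖² with barrier ρ²
  have key : ∀ ⦃x⦄, x ∈ Set.Icc (0:ℝ) t → ‖V x‖ ^ 2 ≤ ρ ^ 2 := by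
    refine image_le_of_deriv_right_lt_deriv_boundary
      (f := fun s => ‖V s‖ ^ 2)
      (f' := fun s => inner ℝ (V s) (V' s) + inner ℝ (V' s) (V s))
      (B := fun _ => ρ ^ 2) (B' := fun _ => 0)
      ?_ ?_ ?_ (fun x => hasDerivAt_const x _) ?_
    · exact ((hVcont.norm).pow 2).mono (fun s hs => hs.1)
    · intro x hx
      have hx0 : x ∈ Set.Ici (0:ℝ) := hx.1
      have hd := ((hVderiv x hx0).mono (Set.Ici_subset_Ici.2 hx.1)).inner ℝ
        ((hVderiv x hx0).mono (Set.Ici_subset_Ici.2 hx.1))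
      have heq : (fun s => ‖V s‖ ^ 2) = fun s => (inner ℝ (V s) (V s) : ℝ) := by
        funext s; rw [real_inner_self_eq_norm_sq]
      rw [heq]
      exact hd
    · have h0 : ‖V 0‖ ≤ ρ := by
        have := le_max_left ‖V 0‖ ρ₃; rw [hρdef]; linarith
      exact pow_le_pow_left₀ (norm_nonneg _) h0 2
    · intro x hx hVx
      have hx0 : x ∈ Set.Ici (0:ℝ) := hx.1
      have h2 : ‖V x‖ ^ 2 = ρ ^ 2 := hVx
      have hnorm : ‖V x‖ = ρ :=
        le_antisymm ((pow_le_pow_iff_left₀ (norm_nonneg _) hρpos.le two_ne_zero).1 h2.le)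
          ((pow_le_pow_iff_left₀ hρpos.le (norm_nonneg _) two_ne_zero).1 h2.ge)
      have hin : (inner ℝ (V x) (V' x) : ℝ)
          = inner ℝ (V x) (V' x - ((1 / ε) * (α - β * ‖V x‖ ^ 2)) • V x)
            + (1 / ε) * (α - β * ‖V x‖ ^ 2) * ‖V x‖ ^ 2 := by
        rw [inner_sub_right, real_inner_smul_right, real_inner_self_eq_norm_sq]
        ring
      have hb : (inner ℝ (V x) (V' x - ((1 / ε) * (α - β * ‖V x‖ ^ 2)) • V x) : ℝ)
          ≤ ‖V x‖ * A :=
        le_trans (real_inner_le_norm _ _)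
          (mul_le_mul_of_nonneg_left (hchar x hx0) (norm_nonneg _))
      have hineq : (inner ℝ (V x) (V' x) : ℝ)
          ≤ ‖V x‖ * A + (1 / ε) * (α - β * ‖V x‖ ^ 2) * ‖V x‖ ^ 2 := by
        rw [hin]; linarith
      rw [hnorm] at hineq
      have hle : ρ * A + (1 / ε) * (α - β * ρ ^ 2) * ρ ^ 2
          = (ρ / ε) * (ε * A + (α - β * ρ ^ 2) * ρ) := by
        field_simp
      have hneg : (inner ℝ (V x) (V' x) : ℝ) < 0 := by
        have h3 : (ρ / ε) * (ε * A + (α - β * ρ ^ 2) * ρ) < 0 :=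
          mul_neg_of_pos_of_neg (by positivity) hcubic
        rw [hle] at hineq
        linarith
      have hsymm : (inner ℝ (V' x) (V x) : ℝ) = inner ℝ (V x) (V' x) :=
        real_inner_comm _ _
      show (inner ℝ (V x) (V' x) : ℝ) + inner ℝ (V' x) (V x) < 0
      rw [hsymm]; linarith
  have hVt : ‖V t‖ ^ 2 ≤ ρ ^ 2 := key ⟨ht, le_refl t⟩
  have hfin : ‖V t‖ ≤ ρ :=
    (pow_le_pow_iff_left₀ (norm_nonneg _) hρpos.le two_ne_zero).1 hVt
  rw [hρdef] at hfin
  linarith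
end

section
/- Fix α, β > 0 and set r = √(α/β). Let A ≥ 0 and ε > 0 with εA < 2αr/(3√3). Let V : [0, ∞) → ℝ^d be an (ε, A)-characteristic velocity with ρ₂^ε(−A) ≤ |V(0)| ≤ ρ₃^ε(A). Then for every t ≥ 0, ρ₂^ε(−A) ≤ |V(t)| ≤ ρ₃^ε(A). -/
set_option maxHeartbeats 4000000


open Real Set

/-- Fix `α, β > 0`, `r = √(α/β)`, `A ≥ 0`, `ε > 0` with
`εA < 2αr/(3√3)`. Let `ρ₂ ∈ [r/√3, r]` be the (larger) zero of
`ρ ↦ −εA + (α − βρ²)ρ` and `ρ₃ ∈ [r,∞)` the zero of `ρ ↦ εA + (α − βρ²)ρ`.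
If `V` is an `(ε,A)`-characteristic velocity with `ρ₂ ≤ |V(0)| ≤ ρ₃`, then
`ρ₂ ≤ |V(t)| ≤ ρ₃` for all `t ≥ 0`. -/
theorem stmt8 (d : ℕ) (α β ε A : ℝ) (hα : 0 < α) (hβ : 0 < β) (hε : 0 < ε)
    (hA : 0 ≤ A) (r : ℝ) (hr : r = Real.sqrt (α / β))
    (hεA : ε * A < 2 * α * r / (3 * Real.sqrt 3))
    (V V' : ℝ → EuclideanSpace ℝ (Fin d))
    (hV'cont : ContinuousOn V' (Set.Ici 0))
    (hVderiv : ∀ t ∈ Set.Ici (0:ℝ), HasDerivWithinAt V (V' t) (Set.Ici 0) t)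
    (hchar : ∀ t ∈ Set.Ici (0:ℝ),
      ‖V' t - ((1 / ε) * (α - β * ‖V t‖ ^ 2)) • V t‖ ≤ A)
    (ρ₂ : ℝ) (hρ₂mem : r / Real.sqrt 3 ≤ ρ₂ ∧ ρ₂ ≤ r)
    (hρ₂ : -(ε * A) + (α - β * ρ₂ ^ 2) * ρ₂ = 0)
    (ρ₃ : ℝ) (hρ₃r : r ≤ ρ₃) (hρ₃ : ε * A + (α - β * ρ₃ ^ 2) * ρ₃ = 0)
    (hV0 : ρ₂ ≤ ‖V 0‖ ∧ ‖V 0‖ ≤ ρ₃) :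
    ∀ t ∈ Set.Ici (0:ℝ), ρ₂ ≤ ‖V t‖ ∧ ‖V t‖ ≤ ρ₃ := by
  -- basic facts about r and √3
  set s : ℝ := Real.sqrt 3 with hs
  have hs2 : s ^ 2 = 3 := Real.sq_sqrt (by norm_num)
  have hspos : 0 < s := Real.sqrt_pos.2 (by norm_num)
  have hrpos : 0 < r := by
    rw [hr]; exact Real.sqrt_pos.2 (div_pos hα hβ)
  have hr2 : β * r ^ 2 = α := by
    rw [hr, Real.sq_sqrt (le_of_lt (div_pos hα hβ))]
    field_simp
  -- ρ₂ is strictly above r/√3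
  have hρ₂gt : r / s < ρ₂ := by
    rcases lt_or_eq_of_le hρ₂mem.1 with h | h
    · exact h
    · exfalso
      have hρ₂eq : ρ₂ = r / s := h.symm
      have hεAeq : ε * A = (α - β * ρ₂ ^ 2) * ρ₂ := by linarith
      rw [hρ₂eq] at hεAeq
      have e1 : (r / s) ^ 2 = r ^ 2 / 3 := by rw [div_pow, hs2]
      rw [e1] at hεAeq
      have e2 : α - β * (r ^ 2 / 3) = 2 * α / 3 := by linarith
      rw [e2] at hεAeq
      have : ε * A = 2 * α * r / (3 * s) := by rw [hεAeq]; ring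
      linarith
  have hρ₂pos : 0 < ρ₂ := lt_trans (div_pos hrpos hspos) hρ₂gt
  have hρ₃pos : 0 < ρ₃ := lt_of_lt_of_le hrpos hρ₃r
  -- the squared norm and its derivative
  set F : ℝ → ℝ := fun t => ‖V t‖ ^ 2 with hF
  set G : ℝ → ℝ := fun t => 2 * (inner ℝ (V' t) (V t) : ℝ) with hG
  have hFd : ∀ x ∈ Set.Ici (0:ℝ), HasDerivWithinAt F (G x) (Set.Ici 0) x := by
    intro x hx
    have h1 : HasDerivWithinAt (fun t => (inner ℝ (V t) (V t) : ℝ))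
        ((inner ℝ (V x) (V' x) : ℝ) + (inner ℝ (V' x) (V x) : ℝ)) (Set.Ici 0) x :=
      HasDerivWithinAt.inner ℝ (hVderiv x hx) (hVderiv x hx)
    have h2 : (fun t => (inner ℝ (V t) (V t) : ℝ)) = F := by
      funext t; exact real_inner_self_eq_norm_sq (V t)
    rw [h2] at h1
    have h3 : G x = (inner ℝ (V x) (V' x) : ℝ) + (inner ℝ (V' x) (V x) : ℝ) := by
      simp only [hG]
      rw [real_inner_comm (V x) (V' x)]; ring
    rw [h3]
    exact h1
  have hFcont : ContinuousOn F (Set.Ici 0) := fun x hx => (hFd x hx).continuousWithinAt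
  -- derivative bounds
  have hbound : ∀ x ∈ Set.Ici (0:ℝ),
      2 * ((1/ε) * (α - β * ‖V x‖ ^ 2)) * ‖V x‖ ^ 2 - 2 * A * ‖V x‖ ≤ G x ∧
      G x ≤ 2 * ((1/ε) * (α - β * ‖V x‖ ^ 2)) * ‖V x‖ ^ 2 + 2 * A * ‖V x‖ := by
    intro x hx
    set p : ℝ := ‖V x‖ with hp
    set c : ℝ := (1/ε) * (α - β * p ^ 2) with hc
    set I : ℝ := (inner ℝ (V' x - c • V x) (V x) : ℝ) with hI
    have hsplit : (inner ℝ (V' x) (V x) : ℝ) = I + c * p ^ 2 := by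
      simp only [hI, inner_sub_left, real_inner_smul_left, real_inner_self_eq_norm_sq, hp]
      ring
    have hGx : G x = 2 * (I + c * p ^ 2) := by
      simp only [hG]; rw [hsplit]
    have hch : ‖V' x - c • V x‖ ≤ A := by
      simpa only [hc, hp] using hchar x hx
    have habs : |I| ≤ A * p := by
      simp only [hI, hp]
      exact le_trans (abs_real_inner_le_norm _ _)
        (mul_le_mul_of_nonneg_right hch (norm_nonneg _))
    have h1 := abs_le.1 habs
    constructor
    · rw [hGx]; linarith [h1.1]
    · rw [hGx]; linarith [h1.2]
  intro t ht
  have htnn : (0:ℝ) ≤ t := ht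
  constructor
  · -- lower bound
    have key : ∀ δ : ℝ, 0 < δ → δ < ρ₂ ^ 2 - r ^ 2 / 3 → ρ₂ ^ 2 - δ ≤ F t := by
      intro δ hδ hδlt
      have := image_le_of_deriv_right_lt_deriv_boundary'
        (f := fun u => -F u) (f' := fun u => -G u) (a := 0) (b := t)
        (hFcont.neg.mono Set.Icc_subset_Ici_self)
        (fun x hx => ((hFd x hx.1).mono (Set.Ici_subset_Ici.2 hx.1)).neg)
        (B := fun _ => -(ρ₂ ^ 2 - δ)) (B' := fun _ => 0)
        (by
          have h0 : ρ₂ ≤ ‖V 0‖ := hV0.1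
          simp only [hF]
          nlinarith [norm_nonneg (V 0)])
        continuousOn_const
        (fun x _ => hasDerivWithinAt_const x _ _)
        ?_ ⟨htnn, le_refl t⟩
      · have h2 : -F t ≤ -(ρ₂ ^ 2 - δ) := this
        linarith
      · intro x hx hFx
        change -F x = -(ρ₂ ^ 2 - δ) at hFx
        have hFxeq : F x = ρ₂ ^ 2 - δ := by linarith
        set ρ : ℝ := ‖V x‖ with hρ
        have hρnn : 0 ≤ ρ := norm_nonneg _
        have hρsq : ρ ^ 2 = ρ₂ ^ 2 - δ := hFxeq
        have hρlt : ρ < ρ₂ := by nlinarith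
        have hρgt : r / s < ρ := by
          have h1 : r ^ 2 / 3 < ρ ^ 2 := by nlinarith
          have h2 : (r / s) ^ 2 = r ^ 2 / 3 := by
            rw [div_pow, hs2]
          nlinarith [div_pos hrpos hspos]
        have hρpos : 0 < ρ := lt_trans (div_pos hrpos hspos) hρgt
        -- (α - βρ²)ρ - εA > 0
        have hεAeq : ε * A = (α - β * ρ₂ ^ 2) * ρ₂ := by linarith
        have hkey : 0 < (α - β * ρ ^ 2) * ρ - ε * A := by
          rw [hεAeq]
          have hsum : r ^ 2 < ρ ^ 2 + ρ * ρ₂ + ρ₂ ^ 2 := by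
            have h2 : (r / s) ^ 2 = r ^ 2 / 3 := by rw [div_pow, hs2]
            have hρ₂sq : r ^ 2 / 3 < ρ₂ ^ 2 := by nlinarith [div_pos hrpos hspos]
            have hρsq' : r ^ 2 / 3 < ρ ^ 2 := by nlinarith [div_pos hrpos hspos]
            nlinarith [mul_pos hρpos hρ₂pos]
          nlinarith [mul_pos (sub_pos.2 hρlt) (sub_pos.2 hsum), hr2]
        have hGpos : 0 < G x := by
          have hlb := (hbound x hx.1).1
          have heq : 2 * ((1/ε) * (α - β * ρ ^ 2)) * ρ ^ 2 - 2 * A * ρ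
              = (2 * ρ / ε) * ((α - β * ρ ^ 2) * ρ - ε * A) := by
            field_simp
          have : 0 < (2 * ρ / ε) * ((α - β * ρ ^ 2) * ρ - ε * A) :=
            mul_pos (div_pos (by linarith) hε) hkey
          calc (0:ℝ) < (2 * ρ / ε) * ((α - β * ρ ^ 2) * ρ - ε * A) := this
            _ = 2 * ((1/ε) * (α - β * ρ ^ 2)) * ρ ^ 2 - 2 * A * ρ := heq.symm
            _ ≤ G x := hlb
        show -G x < (0:ℝ)
        linarith
    by_contra hcon
    push_neg at hcon
    have hFt : F t < ρ₂ ^ 2 := by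
      have : ‖V t‖ < ρ₂ := hcon
      simp only [hF]
      nlinarith [norm_nonneg (V t)]
    have hδ₀ : 0 < ρ₂ ^ 2 - r ^ 2 / 3 := by
      have h2 : (r / s) ^ 2 = r ^ 2 / 3 := by rw [div_pow, hs2]
      nlinarith [div_pos hrpos hspos]
    set δ : ℝ := min (ρ₂ ^ 2 - F t) (ρ₂ ^ 2 - r ^ 2 / 3) / 2 with hδdef
    have hδpos : 0 < δ := by
      apply div_pos _ (by norm_num)
      exact lt_min (by linarith) hδ₀
    have hδlt : δ < ρ₂ ^ 2 - r ^ 2 / 3 := by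
      have := min_le_right (ρ₂ ^ 2 - F t) (ρ₂ ^ 2 - r ^ 2 / 3)
      simp only [hδdef]; linarith
    have hδle : δ ≤ (ρ₂ ^ 2 - F t) / 2 := by
      have := min_le_left (ρ₂ ^ 2 - F t) (ρ₂ ^ 2 - r ^ 2 / 3)
      simp only [hδdef]; linarith
    have := key δ hδpos hδlt
    linarith
  · -- upper bound
    have key : ∀ δ : ℝ, 0 < δ → F t ≤ ρ₃ ^ 2 + δ := by
      intro δ hδ
      have := image_le_of_deriv_right_lt_deriv_boundary'
        (f := F) (f' := G) (a := 0) (b := t)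
        (hFcont.mono Set.Icc_subset_Ici_self)
        (fun x hx => (hFd x hx.1).mono (Set.Ici_subset_Ici.2 hx.1))
        (B := fun _ => ρ₃ ^ 2 + δ) (B' := fun _ => 0)
        (by
          have h0 : ‖V 0‖ ≤ ρ₃ := hV0.2
          simp only [hF]
          nlinarith [norm_nonneg (V 0)])
        continuousOn_const
        (fun x _ => hasDerivWithinAt_const x _ _)
        ?_ ⟨htnn, le_refl t⟩
      · exact this
      · intro x hx hFx
        change F x = ρ₃ ^ 2 + δ at hFx
        set ρ : ℝ := ‖V x‖ with hρ
        have hρnn : 0 ≤ ρ := norm_nonneg _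
        have hρsq : ρ ^ 2 = ρ₃ ^ 2 + δ := hFx
        have hρgt : ρ₃ < ρ := by nlinarith
        have hεAeq : ε * A = -((α - β * ρ₃ ^ 2) * ρ₃) := by linarith
        have hkey : (α - β * ρ ^ 2) * ρ + ε * A < 0 := by
          rw [hεAeq]
          have hsum : r ^ 2 < ρ ^ 2 + ρ * ρ₃ + ρ₃ ^ 2 := by
            nlinarith [mul_pos (lt_trans hρ₃pos hρgt) hρ₃pos]
          nlinarith [mul_pos (sub_pos.2 hρgt) (sub_pos.2 hsum), hr2]
        have hub := (hbound x hx.1).2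
        have heq : 2 * ((1/ε) * (α - β * ρ ^ 2)) * ρ ^ 2 + 2 * A * ρ
            = (2 * ρ / ε) * ((α - β * ρ ^ 2) * ρ + ε * A) := by
          field_simp
        have hρpos : 0 < ρ := lt_trans hρ₃pos hρgt
        have hneg : (2 * ρ / ε) * ((α - β * ρ ^ 2) * ρ + ε * A) < 0 :=
          mul_neg_of_pos_of_neg (div_pos (by linarith) hε) hkey
        calc G x ≤ 2 * ((1/ε) * (α - β * ρ ^ 2)) * ρ ^ 2 + 2 * A * ρ := hub
          _ = (2 * ρ / ε) * ((α - β * ρ ^ 2) * ρ + ε * A) := heq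
          _ < 0 := hneg
    have hFle : F t ≤ ρ₃ ^ 2 := le_of_forall_pos_le_add key
    simp only [hF] at hFle
    nlinarith [norm_nonneg (V t)]
end

section
/- Fix α, β > 0 and set r = √(α/β). Let A ≥ 0 and ε > 0 with εA < 2αr/(3√3). Let V : [0, ∞) → ℝ^d be an (ε, A)-characteristic velocity with ρ₁^ε(−A) < |V(0)| < ρ₂^ε(−A). Then for every t > 0, ρ₁^ε(−A) < |V(0)| < |V(t)| ≤ ρ₃^ε(A). -/
open Real Set Filter Topology

lemma barrier_low (g g' : ℝ → ℝ)
    (hcont : ContinuousOn g (Set.Ici 0))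
    (hderiv : ∀ t ∈ Set.Ici (0:ℝ), HasDerivWithinAt g (g' t) (Set.Ici 0) t)
    (a : ℝ) (hlevel : ∀ t, 0 ≤ t → g t = a → 0 < g' t)
    (t₀ : ℝ) (ht₀ : 0 ≤ t₀) (h0 : a ≤ g t₀) :
    ∀ T, t₀ ≤ T → a ≤ g T := by
  intro T hT
  by_contra hgT
  push_neg at hgT
  have ht₀T : t₀ < T := hT.lt_of_ne (by rintro rfl; exact absurd h0 (not_le.2 hgT))
  set S : Set ℝ := Icc t₀ T ∩ g ⁻¹' (Ici a) with hS
  have hScl : IsClosed S :=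
    (hcont.mono (fun s hs => le_trans ht₀ hs.1)).preimage_isClosed_of_isClosed
      isClosed_Icc isClosed_Ici
  have hne : S.Nonempty := ⟨t₀, ⟨le_refl _, ht₀T.le⟩, h0⟩
  have hbdd : BddAbove S := ⟨T, fun s hs => hs.1.2⟩
  obtain ⟨t₁, ht₁mem, ht₁ub⟩ : ∃ t₁, t₁ ∈ S ∧ ∀ s ∈ S, s ≤ t₁ :=
    ⟨sSup S, hScl.csSup_mem hne hbdd, fun s hs => le_csSup hbdd hs⟩
  obtain ⟨⟨ht₀t₁, ht₁T⟩, hgt₁'⟩ := ht₁mem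
  have hgt₁' : a ≤ g t₁ := hgt₁'
  have ht₁T' : t₁ < T := ht₁T.lt_of_ne (by rintro rfl; exact absurd hgt₁' (not_le.2 hgT))
  have h0t₁ : (0:ℝ) ≤ t₁ := le_trans ht₀ ht₀t₁
  have hlt : ∀ s ∈ Ioc t₁ T, g s < a := by
    intro s hs
    by_contra h
    push_neg at h
    have hsS : s ∈ S := ⟨⟨ht₀t₁.trans hs.1.le, hs.2⟩, h⟩
    exact absurd (ht₁ub s hsS) (not_le.2 hs.1)
  haveI hNB : (𝓝[Ioc t₁ T] t₁).NeBot := by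
    exact left_nhdsWithin_Ioc_neBot ht₁T'
  have hsub : Ioc t₁ T ⊆ Ici (0:ℝ) \ {t₁} :=
    fun s hs => ⟨h0t₁.trans hs.1.le, by simp [hs.1.ne']⟩
  have hga : g t₁ = a := by
    refine le_antisymm ?_ hgt₁'
    have hc : Filter.Tendsto g (𝓝[Ioc t₁ T] t₁) (𝓝 (g t₁)) :=
      ((hderiv t₁ h0t₁).continuousWithinAt.tendsto).mono_left
        (nhdsWithin_mono _ (fun s hs => h0t₁.trans hs.1.le))
    exact le_of_tendsto hc (Filter.eventually_of_mem self_mem_nhdsWithin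
      fun s hs => (hlt s hs).le)
  have hpos : 0 < g' t₁ := hlevel t₁ h0t₁ hga
  have hd := hderiv t₁ h0t₁
  rw [hasDerivWithinAt_iff_tendsto_slope] at hd
  have hd2 : Filter.Tendsto (slope g t₁) (𝓝[Ioc t₁ T] t₁) (𝓝 (g' t₁)) :=
    hd.mono_left (nhdsWithin_mono _ hsub)
  have hev : ∀ᶠ s in 𝓝[Ioc t₁ T] t₁, 0 < slope g t₁ s :=
    hd2.eventually (eventually_gt_nhds hpos)
  obtain ⟨s, hslope, hsIoc⟩ := (hev.and eventually_mem_nhdsWithin).exists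
  have hst : t₁ < s := hsIoc.1
  have hgs : 0 < g s - g t₁ := by
    have h := mul_pos hslope (sub_pos.2 hst)
    rwa [slope_def_field, div_mul_cancel₀ _ (sub_ne_zero.2 hst.ne')] at h
  have := hlt s hsIoc
  rw [hga] at hgs
  linarith

lemma barrier_high (g g' : ℝ → ℝ)
    (hcont : ContinuousOn g (Set.Ici 0))
    (hderiv : ∀ t ∈ Set.Ici (0:ℝ), HasDerivWithinAt g (g' t) (Set.Ici 0) t)
    (b : ℝ) (hlevel : ∀ t, 0 ≤ t → g t = b → g' t < 0)
    (t₀ : ℝ) (ht₀ : 0 ≤ t₀) (h0 : g t₀ ≤ b) :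
    ∀ T, t₀ ≤ T → g T ≤ b := by
  intro T hT
  have := barrier_low (fun s => -g s) (fun s => -(g' s)) hcont.neg
    (fun t ht => (hderiv t ht).neg) (-b)
    (fun t ht hgt => by
      have hgb : g t = b := by
        have := neg_injective hgt
        simpa using this
      simpa using neg_pos.2 (hlevel t ht hgb))
    t₀ ht₀ (neg_le_neg h0) T hT
  simpa using this

/-- Fix `α, β > 0`, `r = √(α/β)`, `A ≥ 0`, `ε > 0` with
`εA < 2αr/(3√3)`. Let `ρ₁ ∈ [0, r/√3]` and `ρ₂ ∈ [r/√3, r]` be the two zeros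
of `ρ ↦ −εA + (α − βρ²)ρ` in `[0, r]`, and `ρ₃ ∈ [r,∞)` the zero of
`ρ ↦ εA + (α − βρ²)ρ`. If `V` is an `(ε,A)`-characteristic velocity with
`ρ₁ < |V(0)| < ρ₂`, then `ρ₁ < |V(0)| < |V(t)| ≤ ρ₃` for all `t > 0`. -/
theorem stmt9 (d : ℕ) (α β ε A : ℝ) (hα : 0 < α) (hβ : 0 < β) (hε : 0 < ε)
    (hA : 0 ≤ A) (r : ℝ) (hr : r = Real.sqrt (α / β))
    (hεA : ε * A < 2 * α * r / (3 * Real.sqrt 3))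
    (V V' : ℝ → EuclideanSpace ℝ (Fin d))
    (hV'cont : ContinuousOn V' (Set.Ici 0))
    (hVderiv : ∀ t ∈ Set.Ici (0:ℝ), HasDerivWithinAt V (V' t) (Set.Ici 0) t)
    (hchar : ∀ t ∈ Set.Ici (0:ℝ),
      ‖V' t - ((1 / ε) * (α - β * ‖V t‖ ^ 2)) • V t‖ ≤ A)
    (ρ₁ : ℝ) (hρ₁mem : 0 ≤ ρ₁ ∧ ρ₁ ≤ r / Real.sqrt 3)
    (hρ₁ : -(ε * A) + (α - β * ρ₁ ^ 2) * ρ₁ = 0)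
    (ρ₂ : ℝ) (hρ₂mem : r / Real.sqrt 3 ≤ ρ₂ ∧ ρ₂ ≤ r)
    (hρ₂ : -(ε * A) + (α - β * ρ₂ ^ 2) * ρ₂ = 0)
    (ρ₃ : ℝ) (hρ₃r : r ≤ ρ₃) (hρ₃ : ε * A + (α - β * ρ₃ ^ 2) * ρ₃ = 0)
    (hV0 : ρ₁ < ‖V 0‖ ∧ ‖V 0‖ < ρ₂) :
    ∀ t, 0 < t → ρ₁ < ‖V 0‖ ∧ ‖V 0‖ < ‖V t‖ ∧ ‖V t‖ ≤ ρ₃ := by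
  obtain ⟨hm1, hm2⟩ := hV0
  set m := ‖V 0‖ with hm
  have hmpos : 0 < m := lt_of_le_of_lt hρ₁mem.1 hm1
  have hρ₁ρ₂ : ρ₁ < ρ₂ := hm1.trans hm2
  have hr0 : 0 < r := by
    rw [hr]; exact Real.sqrt_pos.2 (div_pos hα hβ)
  have hβr : β * r ^ 2 = α := by
    rw [hr, Real.sq_sqrt (div_pos hα hβ).le]
    field_simp
  have hρ₂pos : 0 < ρ₂ := lt_trans hmpos hm2
  have hρ₃pos : 0 < ρ₃ := lt_of_lt_of_le hr0 hρ₃r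
  -- algebraic identity: α = β(ρ₁² + ρ₁ρ₂ + ρ₂²)
  have hfac : (ρ₁ - ρ₂) * (α - β * (ρ₁^2 + ρ₁*ρ₂ + ρ₂^2)) = 0 := by
    linear_combination hρ₁ - hρ₂
  have hαid : α = β * (ρ₁^2 + ρ₁*ρ₂ + ρ₂^2) := by
    rcases mul_eq_zero.1 hfac with h | h
    · exact absurd h (sub_ne_zero.2 hρ₁ρ₂.ne)
    · linarith
  -- positivity of the cubic between ρ₁ and ρ₂
  have Fpos : ∀ ρ, ρ₁ < ρ → ρ < ρ₂ → 0 < -(ε*A) + (α - β*ρ^2)*ρ := by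
    intro ρ h1 h2
    have hid : -(ε*A) + (α - β*ρ^2)*ρ = β*(ρ-ρ₁)*(ρ₂-ρ)*(ρ+ρ₁+ρ₂) := by
      linear_combination hρ₁ + (ρ - ρ₁) * hαid
    rw [hid]
    have h3 : 0 < ρ + ρ₁ + ρ₂ := by
      have : 0 ≤ ρ₁ := hρ₁mem.1
      linarith
    exact mul_pos (mul_pos (mul_pos hβ (sub_pos.2 h1)) (sub_pos.2 h2)) h3
  -- negativity of the other cubic above ρ₃
  have Gneg : ∀ c, ρ₃ < c → ε*A + (α - β*c^2)*c < 0 := by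
    intro c hc
    have hid : ε*A + (α - β*c^2)*c = (c - ρ₃)*(α - β*(c^2 + c*ρ₃ + ρ₃^2)) := by
      linear_combination hρ₃
    rw [hid]
    have hβρ₃ : α ≤ β * ρ₃^2 := by nlinarith [hβr, hρ₃r, hr0.le]
    have hcpos : 0 < c := lt_trans hρ₃pos hc
    have hneg : α - β*(c^2 + c*ρ₃ + ρ₃^2) < 0 := by
      nlinarith [mul_pos hβ (mul_pos hcpos hρ₃pos), mul_pos hβ (mul_pos hcpos hcpos)]
    exact mul_neg_of_pos_of_neg (sub_pos.2 hc) hneg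
  -- the squared norm and its derivative
  set g : ℝ → ℝ := fun u => ‖V u‖^2 with hgdef
  set g' : ℝ → ℝ := fun u => 2 * (inner ℝ (V u) (V' u) : ℝ) with hg'def
  have hgval : ∀ u, g u = ‖V u‖^2 := fun u => rfl
  have hgderiv : ∀ s ∈ Set.Ici (0:ℝ), HasDerivWithinAt g (g' s) (Set.Ici 0) s := by
    intro s hs
    have h : HasDerivWithinAt (fun u => (inner ℝ (V u) (V u) : ℝ))
        ((inner ℝ (V s) (V' s) : ℝ) + inner ℝ (V' s) (V s)) (Set.Ici 0) s :=
      (hVderiv s hs).inner ℝ (hVderiv s hs)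
    have key : HasDerivWithinAt (fun u => ‖V u‖^2)
        (2 * (inner ℝ (V s) (V' s) : ℝ)) (Set.Ici 0) s := by
      have heq : (fun u => ‖V u‖^2) = fun u => (inner ℝ (V u) (V u) : ℝ) := by
        funext u; rw [real_inner_self_eq_norm_sq]
      rw [heq]
      convert h using 1
      rw [real_inner_comm (V' s) (V s)]
      ring
    exact key
  have hVcont : ContinuousOn V (Set.Ici 0) :=
    fun s hs => (hVderiv s hs).continuousWithinAt
  have hgcont : ContinuousOn g (Set.Ici 0) := (hVcont.norm).pow 2
  -- derivative bounds
  have hbounds : ∀ s, 0 ≤ s →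
      2*((1/ε)*(α - β*‖V s‖^2))*‖V s‖^2 - 2*A*‖V s‖ ≤ g' s ∧
      g' s ≤ 2*((1/ε)*(α - β*‖V s‖^2))*‖V s‖^2 + 2*A*‖V s‖ := by
    intro s hs
    have hW : ‖V' s - ((1/ε)*(α - β*‖V s‖^2)) • V s‖ ≤ A := hchar s hs
    set cc : ℝ := (1/ε)*(α - β*‖V s‖^2) with hcc
    set W : EuclideanSpace ℝ (Fin d) := V' s - cc • V s with hWdef
    have hV' : V' s = W + cc • V s := by rw [hWdef]; abel
    have hinner : (inner ℝ (V s) (V' s) : ℝ) = (inner ℝ (V s) W : ℝ) + cc * ‖V s‖^2 := by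
      rw [hV', inner_add_right, real_inner_smul_right, real_inner_self_eq_norm_sq]
    have habs : |(inner ℝ (V s) W : ℝ)| ≤ ‖V s‖ * A :=
      (abs_real_inner_le_norm _ _).trans
        (mul_le_mul_of_nonneg_left hW (norm_nonneg _))
    obtain ⟨hab1, hab2⟩ := abs_le.1 habs
    have hgs : g' s = 2 * (inner ℝ (V s) W : ℝ) + 2 * cc * ‖V s‖^2 := by
      simp only [hg'def]
      rw [hinner]; ring
    constructor
    · rw [hgs, hcc]; linarith
    · rw [hgs, hcc]; linarith
  clear_value g g'
  -- level conditions
  have hnorm_eq : ∀ s c : ℝ, 0 < c → g s = c^2 → ‖V s‖ = c := by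
    intro s c hc hgs
    rw [hgval s] at hgs
    have hx : (‖V s‖ - c) * (‖V s‖ + c) = 0 := by linear_combination hgs
    rcases mul_eq_zero.1 hx with h | h
    · linarith
    · have := norm_nonneg (V s); linarith
  have hlevel_low : ∀ c, ρ₁ < c → c < ρ₂ → ∀ s, 0 ≤ s → g s = c^2 → 0 < g' s := by
    intro c hc1 hc2 s hs hgs
    have hcpos : 0 < c := lt_of_le_of_lt hρ₁mem.1 hc1
    have hVsc : ‖V s‖ = c := hnorm_eq s c hcpos hgs
    have hF := Fpos c hc1 hc2
    have hb := (hbounds s hs).1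
    rw [hVsc] at hb
    have heq : 2*((1/ε)*(α - β*c^2))*c^2 - 2*A*c = (2*c/ε) * (-(ε*A) + (α - β*c^2)*c) := by
      field_simp; ring
    have hprod : 0 < (2*c/ε) * (-(ε*A) + (α - β*c^2)*c) :=
      mul_pos (div_pos (by linarith) hε) hF
    rw [heq] at hb
    linarith
  have hlevel_high : ∀ c, ρ₃ < c → ∀ s, 0 ≤ s → g s = c^2 → g' s < 0 := by
    intro c hc s hs hgs
    have hcpos : 0 < c := lt_trans hρ₃pos hc
    have hVsc : ‖V s‖ = c := hnorm_eq s c hcpos hgs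
    have hG := Gneg c hc
    have hb := (hbounds s hs).2
    rw [hVsc] at hb
    have heq : 2*((1/ε)*(α - β*c^2))*c^2 + 2*A*c = (2*c/ε) * (ε*A + (α - β*c^2)*c) := by
      field_simp; ring
    have hprod : (2*c/ε) * (ε*A + (α - β*c^2)*c) < 0 :=
      mul_neg_of_pos_of_neg (div_pos (by linarith) hε) hG
    rw [heq] at hb
    linarith
  -- lower barrier at level m
  have hg0 : g 0 = m^2 := by rw [hgval 0, hm]
  have hgelow : ∀ T, 0 ≤ T → m^2 ≤ g T :=
    barrier_low g g' hgcont hgderiv (m^2) (hlevel_low m hm1 hm2) 0 le_rfl hg0.ge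
  clear_value m
  -- upper bound by ρ₃
  have hle3 : ∀ T, 0 ≤ T → ‖V T‖ ≤ ρ₃ := by
    intro T hT
    by_contra h
    push_neg at h
    obtain ⟨c, hcρ₃, hcV⟩ : ∃ c, ρ₃ < c ∧ c < ‖V T‖ :=
      ⟨(ρ₃ + ‖V T‖)/2, by linarith, by linarith⟩
    have hcpos : 0 < c := lt_trans hρ₃pos hcρ₃
    have hg0le : g 0 ≤ c^2 := by
      have hmρ₃ : m < ρ₃ := lt_of_lt_of_le hm2 (le_trans hρ₂mem.2 hρ₃r)
      rw [hg0]
      exact pow_le_pow_left₀ hmpos.le (by linarith) 2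
    have hgT := barrier_high g g' hgcont hgderiv (c^2) (hlevel_high c hcρ₃) 0 le_rfl hg0le T hT
    rw [hgval T] at hgT
    have : ‖V T‖ ≤ c := le_of_pow_le_pow_left₀ two_ne_zero hcpos.le hgT
    linarith
  -- main statement
  intro t ht
  refine ⟨hm1, ?_, ?_⟩
  · -- strict increase
    obtain ⟨c, hc1, hc2, hmc⟩ : ∃ c, ρ₁ < c ∧ c < ρ₂ ∧ m < c :=
      ⟨(m + ρ₂)/2, by linarith, by linarith, by linarith⟩
    by_cases hcase : ∃ s, s ∈ Icc (0:ℝ) t ∧ c^2 ≤ g s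
    · obtain ⟨s, hsmem, hsc⟩ := hcase
      have hct := barrier_low g g' hgcont hgderiv (c^2) (hlevel_low c hc1 hc2)
        s hsmem.1 hsc t hsmem.2
      rw [hgval t] at hct
      have : c ≤ ‖V t‖ := le_of_pow_le_pow_left₀ two_ne_zero (norm_nonneg _) hct
      linarith
    · push_neg at hcase
      have hmono : StrictMonoOn g (Icc 0 t) := by
        apply strictMonoOn_of_hasDerivWithinAt_pos (convex_Icc 0 t)
          (hgcont.mono Icc_subset_Ici_self) (f' := g')
        · intro x hx
          rw [interior_Icc] at hx ⊢
          exact (hgderiv x hx.1.le).mono (fun y hy => hy.1.le)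
        · intro x hx
          rw [interior_Icc] at hx
          have hx0 : 0 ≤ x := hx.1.le
          have hgx_lt : g x < c^2 := hcase x ⟨hx.1.le, hx.2.le⟩
          have hgx_ge : m^2 ≤ g x := hgelow x hx0
          rw [hgval x] at hgx_lt hgx_ge
          have hVnn : 0 ≤ ‖V x‖ := norm_nonneg _
          have hρge : m ≤ ‖V x‖ := le_of_pow_le_pow_left₀ two_ne_zero hVnn hgx_ge
          have hc0 : 0 ≤ c := le_trans hρ₁mem.1 hc1.le
          have hρlt : ‖V x‖ < c := lt_of_pow_lt_pow_left₀ 2 hc0 hgx_lt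
          have hF := Fpos ‖V x‖ (lt_of_lt_of_le hm1 hρge) (hρlt.trans hc2)
          have hb := (hbounds x hx0).1
          have heq : 2*((1/ε)*(α - β*‖V x‖^2))*‖V x‖^2 - 2*A*‖V x‖
              = (2*‖V x‖/ε) * (-(ε*A) + (α - β*‖V x‖^2)*‖V x‖) := by
            field_simp; ring
          have hprod : 0 < (2*‖V x‖/ε) * (-(ε*A) + (α - β*‖V x‖^2)*‖V x‖) :=
            mul_pos (div_pos (by linarith) hε) hF
          rw [heq] at hb
          linarith
      have hglt : g 0 < g t := hmono ⟨le_rfl, ht.le⟩ ⟨ht.le, le_rfl⟩ ht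
      rw [hg0, hgval t] at hglt
      exact lt_of_pow_lt_pow_left₀ 2 (norm_nonneg _) hglt
  · exact hle3 t ht.le
end

section
/- Fix α, β > 0 and set r = √(α/β). Let A ≥ 0 and ε > 0 with εA < 2αr/(3√3). Let V : [0, ∞) → ℝ^d be an (ε, A)-characteristic velocity with |V(0)| > ρ₃^ε(A). Then for every t > 0, ρ₂^ε(−A) ≤ |V(t)| < |V(0)|. -/
open Real Set

lemma aux_neg (α β εA r ρ₃ ρ : ℝ) (hβ : 0 < β) (hr0 : 0 < r) (hrα : β * r ^ 2 = α)
    (hρ₃r : r ≤ ρ₃) (hρ₃ : εA + (α - β * ρ₃ ^ 2) * ρ₃ = 0) (hρ : ρ₃ < ρ) :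
    εA + (α - β * ρ ^ 2) * ρ < 0 := by
  have hρ₃0 : 0 < ρ₃ := lt_of_lt_of_le hr0 hρ₃r
  have hρ0 : 0 < ρ := hρ₃0.trans hρ
  have h1 : 0 < ρ - ρ₃ := sub_pos.2 hρ
  have h2 : α < β * (ρ ^ 2 + ρ * ρ₃ + ρ₃ ^ 2) := by
    nlinarith [mul_le_mul hρ₃r hρ₃r hr0.le hρ₃0.le, mul_pos hρ0 hρ0, mul_pos hρ0 hρ₃0]
  nlinarith [mul_pos h1 (sub_pos.2 h2)]

lemma aux_pos (α β εA r m ρ₂ ρ : ℝ) (hβ : 0 < β) (hrα : β * r ^ 2 = α)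
    (hm0 : 0 < m) (hm2 : 3 * m ^ 2 = r ^ 2) (hρ₂m : m ≤ ρ₂)
    (hρ₂ : -εA + (α - β * ρ₂ ^ 2) * ρ₂ = 0)
    (hρm : m ≤ ρ) (hρρ₂ : ρ ≤ ρ₂) :
    0 ≤ -εA + (α - β * ρ ^ 2) * ρ := by
  have hρ₂0 : 0 < ρ₂ := lt_of_lt_of_le hm0 hρ₂m
  have hρ0 : 0 < ρ := lt_of_lt_of_le hm0 hρm
  have h1 : 0 ≤ ρ₂ - ρ := sub_nonneg.2 hρρ₂
  have h2 : α ≤ β * (ρ ^ 2 + ρ * ρ₂ + ρ₂ ^ 2) := by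
    nlinarith [mul_le_mul hρm hρm hm0.le hρ0.le, mul_le_mul hρm hρ₂m hm0.le hρ0.le,
      mul_le_mul hρ₂m hρ₂m hm0.le hρ₂0.le]
  nlinarith [mul_nonneg h1 (sub_nonneg.2 h2)]

lemma aux_m_lt_rho2 (α β ε A r m ρ₂ : ℝ)
    (hrα : β * r ^ 2 = α) (hm2 : 3 * m ^ 2 = r ^ 2)
    (hεA : ε * A < 2 * α / 3 * m) (hρ₂m : m ≤ ρ₂)
    (hρ₂ : -(ε * A) + (α - β * ρ₂ ^ 2) * ρ₂ = 0) : m < ρ₂ := by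
  rcases lt_or_eq_of_le hρ₂m with h | h
  · exact h
  · exfalso
    have hβm : 3 * (β * m ^ 2) = β * r ^ 2 := by linear_combination β * hm2
    have hgm : α - β * m ^ 2 = 2 * α / 3 := by linarith
    rw [← h, hgm] at hρ₂
    linarith

/-- Fix `α, β > 0`, `r = √(α/β)`, `A ≥ 0`, `ε > 0` with
`εA < 2αr/(3√3)`. Let `ρ₂ ∈ [r/√3, r]` be the larger zero of
`ρ ↦ −εA + (α − βρ²)ρ` in `[0, r]`, and `ρ₃ ∈ [r,∞)` the zero of
`ρ ↦ εA + (α − βρ²)ρ`. If `V` is an `(ε,A)`-characteristic velocity with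
`|V(0)| > ρ₃`, then `ρ₂ ≤ |V(t)| < |V(0)|` for all `t > 0`. -/
theorem stmt10 (d : ℕ) (α β ε A : ℝ) (hα : 0 < α) (hβ : 0 < β) (hε : 0 < ε)
    (hA : 0 ≤ A) (r : ℝ) (hr : r = Real.sqrt (α / β))
    (hεA : ε * A < 2 * α * r / (3 * Real.sqrt 3))
    (V V' : ℝ → EuclideanSpace ℝ (Fin d))
    (hV'cont : ContinuousOn V' (Set.Ici 0))
    (hVderiv : ∀ t ∈ Set.Ici (0:ℝ), HasDerivWithinAt V (V' t) (Set.Ici 0) t)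
    (hchar : ∀ t ∈ Set.Ici (0:ℝ),
      ‖V' t - ((1 / ε) * (α - β * ‖V t‖ ^ 2)) • V t‖ ≤ A)
    (ρ₂ : ℝ) (hρ₂mem : r / Real.sqrt 3 ≤ ρ₂ ∧ ρ₂ ≤ r)
    (hρ₂ : -(ε * A) + (α - β * ρ₂ ^ 2) * ρ₂ = 0)
    (ρ₃ : ℝ) (hρ₃r : r ≤ ρ₃) (hρ₃ : ε * A + (α - β * ρ₃ ^ 2) * ρ₃ = 0)
    (hV0 : ρ₃ < ‖V 0‖) :
    ∀ t, 0 < t → ρ₂ ≤ ‖V t‖ ∧ ‖V t‖ < ‖V 0‖ := by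
  -- basic numeric facts
  have hαβ : (0:ℝ) < α / β := div_pos hα hβ
  have hr0 : 0 < r := by rw [hr]; exact Real.sqrt_pos.2 hαβ
  have hrα : β * r ^ 2 = α := by
    rw [hr, Real.sq_sqrt hαβ.le]; field_simp
  have h3 : (0:ℝ) < Real.sqrt 3 := Real.sqrt_pos.2 (by norm_num)
  set m := r / Real.sqrt 3 with hm
  have hm0 : 0 < m := div_pos hr0 h3
  have hm2 : 3 * m ^ 2 = r ^ 2 := by
    rw [hm, div_pow, Real.sq_sqrt (by norm_num : (0:ℝ) ≤ 3)]
    field_simp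
  have hρ₂0 : 0 < ρ₂ := lt_of_lt_of_le hm0 hρ₂mem.1
  have hρ₃0 : 0 < ρ₃ := lt_of_lt_of_le hr0 hρ₃r
  have hρ₂ρ₃ : ρ₂ ≤ ρ₃ := le_trans hρ₂mem.2 hρ₃r
  have hmρ₂ : m < ρ₂ := by
    apply aux_m_lt_rho2 α β ε A r m ρ₂ hrα hm2 _ hρ₂mem.1 hρ₂
    have hq : 2 * α / 3 * m = 2 * α * r / (3 * Real.sqrt 3) := by rw [hm]; ring
    rw [hq]; exact hεA
  have hm2ρ₂ : m ^ 2 < ρ₂ ^ 2 := by nlinarith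
  -- continuity and derivative of f = ‖V ·‖²
  have hVcont : ContinuousOn V (Ici 0) := fun t ht => (hVderiv t ht).continuousWithinAt
  set f : ℝ → ℝ := fun t => ‖V t‖ ^ 2 with hf
  have hfcont : ContinuousOn f (Ici 0) := (hVcont.norm).pow 2
  have hfderiv : ∀ t : ℝ, 0 < t →
      HasDerivAt f (2 * (inner ℝ (V t) (V' t) : ℝ)) t := by
    intro t ht
    have hV : HasDerivAt V (V' t) t :=
      (hVderiv t (le_of_lt ht)).hasDerivAt (Ici_mem_nhds ht)
    have h := hV.inner ℝ hV
    have heq : (fun s => (inner ℝ (V s) (V s) : ℝ)) = f := by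
      funext s
      rw [hf]
      exact real_inner_self_eq_norm_sq _
    rw [heq] at h
    exact h.congr_deriv (by rw [real_inner_comm (V' t) (V t)]; ring)
  -- derivative bounds
  have hbounds : ∀ t : ℝ, 0 ≤ t →
      2 * ‖V t‖ / ε * (-(ε * A) + (α - β * ‖V t‖ ^ 2) * ‖V t‖)
        ≤ 2 * (inner ℝ (V t) (V' t) : ℝ) ∧
      2 * (inner ℝ (V t) (V' t) : ℝ)
        ≤ 2 * ‖V t‖ / ε * (ε * A + (α - β * ‖V t‖ ^ 2) * ‖V t‖) := by
    intro t ht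
    set c : ℝ := (1 / ε) * (α - β * ‖V t‖ ^ 2) with hc
    have hW : ‖V' t - c • V t‖ ≤ A := hchar t ht
    have hinner : (inner ℝ (V t) (V' t) : ℝ)
        = (inner ℝ (V t) (V' t - c • V t) : ℝ) + c * ‖V t‖ ^ 2 := by
      rw [inner_sub_right, real_inner_smul_right, real_inner_self_eq_norm_sq]
      ring
    have habs : |(inner ℝ (V t) (V' t - c • V t) : ℝ)| ≤ ‖V t‖ * A :=
      le_trans (abs_real_inner_le_norm _ _)
        (mul_le_mul_of_nonneg_left hW (norm_nonneg _))
    obtain ⟨hab1, hab2⟩ := abs_le.1 habs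
    have hεne : ε ≠ 0 := hε.ne'
    constructor
    · have hRHS : 2 * ‖V t‖ / ε * (-(ε * A) + (α - β * ‖V t‖ ^ 2) * ‖V t‖)
          = -(2 * (‖V t‖ * A)) + 2 * (c * ‖V t‖ ^ 2) := by
        rw [hc]; field_simp
      rw [hRHS, hinner]; linarith
    · have hRHS : 2 * ‖V t‖ / ε * (ε * A + (α - β * ‖V t‖ ^ 2) * ‖V t‖)
          = 2 * (‖V t‖ * A) + 2 * (c * ‖V t‖ ^ 2) := by
        rw [hc]; field_simp
      rw [hRHS, hinner]; linarith
  -- monotonicity helpers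
  have key_anti : ∀ a b : ℝ, 0 ≤ a → a < b →
      (∀ x, a < x → x < b → ρ₃ < ‖V x‖) → f b < f a := by
    intro a b ha hab hmid
    have hanti : StrictAntiOn f (Icc a b) := by
      apply strictAntiOn_of_deriv_neg (convex_Icc a b)
        (hfcont.mono (Icc_subset_Ici_self.trans (Ici_subset_Ici.2 ha)))
      intro x hx
      rw [interior_Icc] at hx
      have hx0 : 0 < x := lt_of_le_of_lt ha hx.1
      rw [(hfderiv x hx0).deriv]
      have h1 := (hbounds x hx0.le).2
      have h2 := aux_neg α β (ε * A) r ρ₃ ‖V x‖ hβ hr0 hrα hρ₃r hρ₃ (hmid x hx.1 hx.2)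
      have hVx : 0 < ‖V x‖ := lt_trans hρ₃0 (hmid x hx.1 hx.2)
      have h3 : 2 * ‖V x‖ / ε * (ε * A + (α - β * ‖V x‖ ^ 2) * ‖V x‖) < 0 :=
        mul_neg_of_pos_of_neg (by positivity) h2
      linarith
    exact hanti (left_mem_Icc.2 hab.le) (right_mem_Icc.2 hab.le) hab
  have key_mono : ∀ a b : ℝ, 0 ≤ a → a ≤ b →
      (∀ x, a < x → x < b → m ≤ ‖V x‖ ∧ ‖V x‖ ≤ ρ₂) → f a ≤ f b := by
    intro a b ha hab hmid
    have hmono : MonotoneOn f (Icc a b) := by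
      apply monotoneOn_of_deriv_nonneg (convex_Icc a b)
        (hfcont.mono (Icc_subset_Ici_self.trans (Ici_subset_Ici.2 ha)))
      · intro x hx
        rw [interior_Icc] at hx
        have hx0 : 0 < x := lt_of_le_of_lt ha hx.1
        exact ((hfderiv x hx0).differentiableAt).differentiableWithinAt
      · intro x hx
        rw [interior_Icc] at hx
        have hx0 : 0 < x := lt_of_le_of_lt ha hx.1
        rw [(hfderiv x hx0).deriv]
        have h1 := (hbounds x hx0.le).1
        have h2 := aux_pos α β (ε * A) r m ρ₂ ‖V x‖ hβ hrα hm0 hm2 hmρ₂.le hρ₂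
          (hmid x hx.1 hx.2).1 (hmid x hx.1 hx.2).2
        have h3 : 0 ≤ 2 * ‖V x‖ / ε * (-(ε * A) + (α - β * ‖V x‖ ^ 2) * ‖V x‖) :=
          mul_nonneg (by positivity) h2
        linarith
    exact hmono (left_mem_Icc.2 hab) (right_mem_Icc.2 hab) hab
  have hf0 : ρ₃ ^ 2 < f 0 := pow_lt_pow_left₀ hV0 hρ₃0.le two_ne_zero
  -- Part A1: f t ≤ f 0 for all t ≥ 0
  have hA1 : ∀ t, 0 ≤ t → f t ≤ f 0 := by
    intro t ht
    by_contra hgt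
    push_neg at hgt
    have ht0 : 0 < t := by
      rcases ht.lt_or_eq with h | h
      · exact h
      · exfalso; rw [← h] at hgt; exact lt_irrefl _ hgt
    set S : Set ℝ := Icc 0 t ∩ f ⁻¹' (Iic (f 0)) with hS
    have hScl : IsClosed S :=
      (hfcont.mono Icc_subset_Ici_self).preimage_isClosed_of_isClosed
        isClosed_Icc isClosed_Iic
    have hScomp : IsCompact S := isCompact_Icc.of_isClosed_subset hScl inter_subset_left
    have hSne : S.Nonempty := ⟨0, ⟨le_refl 0, ht0.le⟩, le_refl (f 0)⟩
    set s := sSup S with hs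
    have hsS : s ∈ S := hScomp.sSup_mem hSne
    have hs0 : 0 ≤ s := hsS.1.1
    have hst : s < t := by
      rcases hsS.1.2.lt_or_eq with h | h
      · exact h
      · exfalso; have h2 := hsS.2; rw [h] at h2; exact absurd h2 (not_le.2 hgt)
    have hmid : ∀ x, s < x → x < t → ρ₃ < ‖V x‖ := by
      intro x hx1 hx2
      have hfx : f 0 < f x := by
        by_contra hle
        push_neg at hle
        have hxS : x ∈ S := ⟨⟨le_trans hs0 hx1.le, hx2.le⟩, hle⟩
        exact absurd (le_csSup hScomp.bddAbove hxS) (not_le.2 hx1)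
      exact lt_of_pow_lt_pow_left₀ 2 (norm_nonneg _) (show ρ₃ ^ 2 < f x by linarith)
    have h1 := key_anti s t hs0 hst hmid
    have h2 : f s ≤ f 0 := hsS.2
    linarith
  -- Part A2: strict for t > 0
  have hA2 : ∀ t, 0 < t → f t < f 0 := by
    intro t ht
    rcases (hA1 t ht.le).lt_or_eq with h | h
    · exact h
    exfalso
    set L := (ρ₃ ^ 2 + f 0) / 2 with hL
    have hL1 : ρ₃ ^ 2 < L := by rw [hL]; linarith
    have hL2 : L < f 0 := by rw [hL]; linarith
    set S : Set ℝ := Icc 0 t ∩ f ⁻¹' (Iic L) with hS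
    have hScl : IsClosed S :=
      (hfcont.mono Icc_subset_Ici_self).preimage_isClosed_of_isClosed
        isClosed_Icc isClosed_Iic
    have hScomp : IsCompact S := isCompact_Icc.of_isClosed_subset hScl inter_subset_left
    by_cases hSne : S.Nonempty
    · set s := sSup S with hs
      have hsS : s ∈ S := hScomp.sSup_mem hSne
      have hs0 : 0 ≤ s := hsS.1.1
      have hst : s < t := by
        rcases hsS.1.2.lt_or_eq with h' | h'
        · exact h'
        · exfalso; have h2 := hsS.2; rw [h'] at h2
          simp only [mem_preimage, mem_Iic] at h2; rw [h] at h2; linarith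
      have hmid : ∀ x, s < x → x < t → ρ₃ < ‖V x‖ := by
        intro x hx1 hx2
        have hfx : L < f x := by
          by_contra hle
          push_neg at hle
          have hxS : x ∈ S := ⟨⟨le_trans hs0 hx1.le, hx2.le⟩, hle⟩
          exact absurd (le_csSup hScomp.bddAbove hxS) (not_le.2 hx1)
        exact lt_of_pow_lt_pow_left₀ 2 (norm_nonneg _) (show ρ₃ ^ 2 < f x by linarith)
      have h1 := key_anti s t hs0 hst hmid
      have h2 : f s ≤ L := hsS.2
      rw [h] at h1
      linarith
    · rw [Set.not_nonempty_iff_eq_empty] at hSne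
      have hmid : ∀ x, 0 < x → x < t → ρ₃ < ‖V x‖ := by
        intro x hx1 hx2
        have hfx : L < f x := by
          by_contra hle
          push_neg at hle
          have hxS : x ∈ S := ⟨⟨hx1.le, hx2.le⟩, hle⟩
          rw [hSne] at hxS
          exact hxS
        exact lt_of_pow_lt_pow_left₀ 2 (norm_nonneg _) (show ρ₃ ^ 2 < f x by linarith)
      have h1 := key_anti 0 t le_rfl ht hmid
      rw [h] at h1
      exact lt_irrefl _ h1
  -- Part B: lower bound
  have hB : ∀ t, 0 < t → ρ₂ ≤ ‖V t‖ := by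
    intro t ht
    by_contra hlt
    push_neg at hlt
    have hft : f t < ρ₂ ^ 2 := pow_lt_pow_left₀ hlt (norm_nonneg _) two_ne_zero
    set S : Set ℝ := Icc 0 t ∩ f ⁻¹' (Ici (ρ₂ ^ 2)) with hS
    have hScl : IsClosed S :=
      (hfcont.mono Icc_subset_Ici_self).preimage_isClosed_of_isClosed
        isClosed_Icc isClosed_Ici
    have hScomp : IsCompact S := isCompact_Icc.of_isClosed_subset hScl inter_subset_left
    have hSne : S.Nonempty := by
      refine ⟨0, ⟨le_refl 0, ht.le⟩, ?_⟩
      simp only [mem_preimage, mem_Ici]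
      have h1 : ρ₂ ^ 2 ≤ ρ₃ ^ 2 := pow_le_pow_left₀ hρ₂0.le hρ₂ρ₃ 2
      linarith
    set s := sSup S with hs
    have hsS : s ∈ S := hScomp.sSup_mem hSne
    have hs0 : 0 ≤ s := hsS.1.1
    have hfs : ρ₂ ^ 2 ≤ f s := hsS.2
    have hst : s < t := by
      rcases hsS.1.2.lt_or_eq with h' | h'
      · exact h'
      · exfalso; rw [h'] at hfs; linarith
    have hupper : ∀ x, s < x → x ≤ t → f x < ρ₂ ^ 2 := by
      intro x hx1 hx2
      by_contra hle
      push_neg at hle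
      have hxS : x ∈ S := ⟨⟨le_trans hs0 hx1.le, hx2⟩, hle⟩
      exact absurd (le_csSup hScomp.bddAbove hxS) (not_le.2 hx1)
    set T : Set ℝ := Icc s t ∩ f ⁻¹' (Iic (m ^ 2)) with hT
    have hTcl : IsClosed T :=
      (hfcont.mono ((Icc_subset_Icc_left hs0).trans
        Icc_subset_Ici_self)).preimage_isClosed_of_isClosed isClosed_Icc isClosed_Iic
    have hTcomp : IsCompact T := isCompact_Icc.of_isClosed_subset hTcl inter_subset_left
    by_cases hTne : T.Nonempty
    · set u := sInf T with hu
      have huT : u ∈ T := hTcomp.sInf_mem hTne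
      have hfu : f u ≤ m ^ 2 := huT.2
      have hsu : s < u := by
        rcases huT.1.1.lt_or_eq with h' | h'
        · exact h'
        · exfalso; rw [← h'] at hfu; linarith
      have hlow : ∀ x, s ≤ x → x < u → m ^ 2 < f x := by
        intro x hx1 hx2
        by_contra hle
        push_neg at hle
        have hxT : x ∈ T := ⟨⟨hx1, le_trans hx2.le huT.1.2⟩, hle⟩
        exact absurd (csInf_le hTcomp.bddBelow hxT) (not_le.2 hx2)
      have hmid : ∀ x, s < x → x < u → m ≤ ‖V x‖ ∧ ‖V x‖ ≤ ρ₂ := by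
        intro x hx1 hx2
        have h1 : m ^ 2 < f x := hlow x hx1.le hx2
        have h2 : f x < ρ₂ ^ 2 := hupper x hx1 (le_trans hx2.le huT.1.2)
        exact ⟨(lt_of_pow_lt_pow_left₀ 2 (norm_nonneg _) h1).le,
          (lt_of_pow_lt_pow_left₀ 2 hρ₂0.le h2).le⟩
      have := key_mono s u hs0 hsu.le hmid
      linarith
    · rw [Set.not_nonempty_iff_eq_empty] at hTne
      have hmid : ∀ x, s < x → x < t → m ≤ ‖V x‖ ∧ ‖V x‖ ≤ ρ₂ := by
        intro x hx1 hx2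
        have h1 : m ^ 2 < f x := by
          by_contra hle
          push_neg at hle
          have hxT : x ∈ T := ⟨⟨hx1.le, hx2.le⟩, hle⟩
          rw [hTne] at hxT
          exact hxT
        have h2 : f x < ρ₂ ^ 2 := hupper x hx1 hx2.le
        exact ⟨(lt_of_pow_lt_pow_left₀ 2 (norm_nonneg _) h1).le,
          (lt_of_pow_lt_pow_left₀ 2 hρ₂0.le h2).le⟩
      have := key_mono s t hs0 hst.le hmid
      linarith
  intro t ht
  refine ⟨hB t ht, ?_⟩
  exact lt_of_pow_lt_pow_left₀ 2 (norm_nonneg _) (hA2 t ht)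
end

section
/- Fix α, β > 0 and set r = √(α/β), and define V(s; v) = r e^{αs} v / √(|v|²(e^{2αs} − 1) + r²) for v ∈ ℝ^d, v ≠ 0, and s ≥ 0. Then for each fixed s ≥ 0 the map v ↦ V(s; v) is differentiable at every v ≠ 0, with Fréchet derivative given by (∂V/∂v)(s; v) w = (|V(s; v)|/|v|) [ w − (1 − e^{−2αs}) (V(s; v) · w) V(s; v)/r² ] for all w ∈ ℝ^d; equivalently (∂V/∂v)(s; v) = (|V(s; v)|/|v|) ( I − (V(s; v) ⊗ V(s; v)/r²)(1 − e^{−2αs}) ). -/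
open Real Set

/-- Fix `α, β > 0`, `r = √(α/β)`, and let
`V(s;v) = r e^{αs} v / √(|v|²(e^{2αs} − 1) + r²)` for `s ≥ 0`, `v ≠ 0`. Then
for each fixed `s ≥ 0` the map `v ↦ V(s;v)` is (Fréchet) differentiable at
every `v ≠ 0`, with derivative
`w ↦ (|V(s;v)|/|v|) (w − (1 − e^{−2αs}) ⟪V(s;v), w⟫ V(s;v)/r²)`, i.e.
`∂V/∂v = (|V|/|v|)(I − (V ⊗ V/r²)(1 − e^{−2αs}))`. -/
theorem stmt12 (d : ℕ) (α β : ℝ) (hα : 0 < α) (hβ : 0 < β)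
    (r : ℝ) (hr : r = Real.sqrt (α / β))
    (V : ℝ → EuclideanSpace ℝ (Fin d) → EuclideanSpace ℝ (Fin d))
    (hV : V = fun s v =>
      (r * Real.exp (α * s) /
        Real.sqrt (‖v‖ ^ 2 * (Real.exp (2 * α * s) - 1) + r ^ 2)) • v) :
    ∀ s ∈ Set.Ici (0:ℝ), ∀ v : EuclideanSpace ℝ (Fin d), v ≠ 0 →
      HasFDerivAt (fun w => V s w)
        ((‖V s v‖ / ‖v‖) •
          (ContinuousLinearMap.id ℝ (EuclideanSpace ℝ (Fin d)) -
            ((1 - Real.exp (-(2 * α * s))) / r ^ 2) •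
              ((innerSL ℝ (V s v)).smulRight (V s v)))) v := by
  subst hV
  intro s hs v hv
  simp only [mem_Ici] at hs
  have hrpos : 0 < r := hr ▸ Real.sqrt_pos.2 (div_pos hα hβ)
  set K := r * Real.exp (α * s) with hKdef
  have hK : 0 < K := mul_pos hrpos (Real.exp_pos _)
  set E := Real.exp (2 * α * s) - 1 with hEdef
  have hEnn : 0 ≤ E := by
    have h1 : (1:ℝ) ≤ Real.exp (2 * α * s) := Real.one_le_exp (by positivity)
    exact sub_nonneg.2 h1
  set q := ‖v‖ ^ 2 * E + r ^ 2 with hqdef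
  have hq : 0 < q := add_pos_of_nonneg_of_pos (mul_nonneg (sq_nonneg _) hEnn) (pow_pos hrpos 2)
  set D := Real.sqrt q with hDdef
  have hD : 0 < D := Real.sqrt_pos.2 hq
  have hD2 : D ^ 2 = q := Real.sq_sqrt hq.le
  have h1 : HasFDerivAt (fun w : EuclideanSpace ℝ (Fin d) => ‖w‖ ^ 2 * E + r ^ 2)
      ((2 * E) • (innerSL ℝ v)) v := by
    have := ((hasFDerivAt_id v).norm_sq.mul_const E).add_const (r ^ 2)
    refine this.congr_fderiv ?_
    ext w
    simp [two_smul]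
    ring
  have h2 : HasDerivAt (fun t : ℝ => K / Real.sqrt t) (-K / (2 * D * q)) q := by
    have hs' : HasDerivAt Real.sqrt (1 / (2 * D)) q := Real.hasDerivAt_sqrt hq.ne'
    have := (hasDerivAt_const q K).div hs' hD.ne'
    refine this.congr_deriv ?_
    rw [← hDdef, ← hD2]
    field_simp
    ring
  have h3 : HasFDerivAt (fun w : EuclideanSpace ℝ (Fin d) =>
      K / Real.sqrt (‖w‖ ^ 2 * E + r ^ 2))
      ((-K / (2 * D * q)) • ((2 * E) • (innerSL ℝ v))) v :=
    h2.comp_hasFDerivAt (h₂ := fun t : ℝ => K / Real.sqrt t) v h1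
  have h4 := h3.smul (hasFDerivAt_id v)
  have hexp2 : Real.exp (α * s) ^ 2 = Real.exp (2 * α * s) := by
    rw [sq, ← Real.exp_add]; ring_nf
  have key : K ^ 2 * (1 - Real.exp (-(2 * α * s))) = r ^ 2 * E := by
    rw [hKdef, hEdef, mul_pow, hexp2, Real.exp_neg]
    field_simp
  have hnv : (0:ℝ) < ‖v‖ := norm_pos_iff.2 hv
  have hVnorm : ‖(K / D) • v‖ = (K / D) * ‖v‖ := by
    rw [norm_smul, Real.norm_eq_abs, abs_of_pos (div_pos hK hD)]
  have hEq : ((K / Real.sqrt (‖v‖ ^ 2 * E + r ^ 2)) •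
        ContinuousLinearMap.id ℝ (EuclideanSpace ℝ (Fin d)) +
        ((-K / (2 * D * q)) • ((2 * E) • (innerSL ℝ v))).smulRight (id v))
      = ((‖(K / D) • v‖ / ‖v‖) •
          (ContinuousLinearMap.id ℝ (EuclideanSpace ℝ (Fin d)) -
            ((1 - Real.exp (-(2 * α * s))) / r ^ 2) •
              ((innerSL ℝ ((K / D) • v)).smulRight ((K / D) • v)))) := by
    refine ContinuousLinearMap.ext fun w => ?_
    simp only [ContinuousLinearMap.add_apply, ContinuousLinearMap.smul_apply,
      ContinuousLinearMap.coe_id', id_eq, ContinuousLinearMap.smulRight_apply,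
      ContinuousLinearMap.coe_sub', Pi.sub_apply, innerSL_apply_apply,
      real_inner_smul_left, hVnorm, ← hqdef, ← hDdef]
    rw [smul_sub]
    match_scalars
    · field_simp
    · simp only [smul_eq_mul]
      have he : 1 - Real.exp (-(2 * α * s)) = r ^ 2 * E / K ^ 2 := by
        rw [eq_div_iff (pow_ne_zero 2 hK.ne')]; linarith [key]
      rw [he, ← hD2]
      field_simp
  exact h4.congr_fderiv hEq
end

section
/- Fix α, β > 0 and set r = √(α/β). For v ∈ ℝ^d let V(s; v) = r e^{αs} v / √(|v|²(e^{2αs} − 1) + r²), defined for s ∈ (S(v), ∞) where S(v) = −∞ if |v| ≤ r and S(v) = (1/(2α)) ln(1 − r²/|v|²) if |v| > r. Then: (i) if 0 < |v| < r, the function s ↦ |V(s; v)| is strictly increasing on ℝ; (ii) if |v| = r, then |V(s; v)| = r for all s; (iii) if |v| > r, the function s ↦ |V(s; v)| is strictly decreasing on (S(v), ∞). -/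
open Real Set

lemma step_aux (a1 a2 D1 D2 : ℝ) (ha1 : 0 ≤ a1) (ha2 : 0 ≤ a2)
    (hD1 : 0 < D1) (hD2 : 0 < D2)
    (h : a1 ^ 2 * D2 < a2 ^ 2 * D1) : a1 / Real.sqrt D1 < a2 / Real.sqrt D2 := by
  have h1 := Real.sqrt_pos.2 hD1
  have h2 := Real.sqrt_pos.2 hD2
  rw [div_lt_div_iff₀ h1 h2]
  calc a1 * Real.sqrt D2 = Real.sqrt (a1 ^ 2 * D2) := by
        rw [Real.sqrt_mul (by positivity), Real.sqrt_sq ha1]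
    _ < Real.sqrt (a2 ^ 2 * D1) := Real.sqrt_lt_sqrt (by positivity) h
    _ = a2 * Real.sqrt D1 := by
        rw [Real.sqrt_mul (by positivity), Real.sqrt_sq ha2]

/-- Fix `α, β > 0`, `r = √(α/β)`, and let
`V(s;v) = r e^{αs} v / √(|v|²(e^{2αs} − 1) + r²)` on `s ∈ (S(v), ∞)`, with
`S(v) = −∞` for `|v| ≤ r` and `S(v) = (1/(2α)) ln(1 − r²/|v|²)` for `|v| > r`.
Then (i) for `0 < |v| < r`, `s ↦ |V(s;v)|` is strictly increasing on `ℝ`;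
(ii) for `|v| = r`, `|V(s;v)| = r` for all `s`; (iii) for `|v| > r`,
`s ↦ |V(s;v)|` is strictly decreasing on `(S(v), ∞)`. -/
theorem stmt13 (d : ℕ) (α β : ℝ) (hα : 0 < α) (hβ : 0 < β)
    (r : ℝ) (hr : r = Real.sqrt (α / β))
    (V : ℝ → EuclideanSpace ℝ (Fin d) → EuclideanSpace ℝ (Fin d))
    (hV : V = fun s v =>
      (r * Real.exp (α * s) /
        Real.sqrt (‖v‖ ^ 2 * (Real.exp (2 * α * s) - 1) + r ^ 2)) • v) :
    (∀ v : EuclideanSpace ℝ (Fin d), 0 < ‖v‖ → ‖v‖ < r →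
      StrictMono fun s => ‖V s v‖) ∧
    (∀ v : EuclideanSpace ℝ (Fin d), ‖v‖ = r → ∀ s, ‖V s v‖ = r) ∧
    (∀ v : EuclideanSpace ℝ (Fin d), r < ‖v‖ →
      StrictAntiOn (fun s => ‖V s v‖)
        (Set.Ioi (1 / (2 * α) * Real.log (1 - r ^ 2 / ‖v‖ ^ 2)))) := by
  have hr0 : 0 < r := by
    rw [hr]; exact Real.sqrt_pos.2 (div_pos hα hβ)
  have he : ∀ s : ℝ, Real.exp (α * s) ^ 2 = Real.exp (2 * α * s) := by
    intro s; rw [sq, ← Real.exp_add]; ring_nf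
  subst hV
  refine ⟨?_, ?_, ?_⟩
  · -- case (i)
    intro v hv0 hvr s1 s2 h12
    have hc : 0 < r ^ 2 - ‖v‖ ^ 2 := by nlinarith
    have hD : ∀ s : ℝ, 0 < ‖v‖ ^ 2 * (Real.exp (2 * α * s) - 1) + r ^ 2 := by
      intro s
      nlinarith [Real.exp_pos (2 * α * s), sq_nonneg ‖v‖,
        mul_nonneg (sq_nonneg ‖v‖) (Real.exp_pos (2 * α * s)).le]
    have hE : Real.exp (2 * α * s1) < Real.exp (2 * α * s2) := by
      apply Real.exp_lt_exp.2; nlinarith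
    simp only [norm_smul, Real.norm_eq_abs]
    rw [abs_of_nonneg (by positivity), abs_of_nonneg (by positivity)]
    apply mul_lt_mul_of_pos_right _ hv0
    apply step_aux _ _ _ _ (by positivity) (by positivity) (hD s1) (hD s2)
    rw [mul_pow, mul_pow, he s1, he s2]
    nlinarith [mul_pos (mul_pos (pow_pos hr0 2) hc) (sub_pos.2 hE)]
  · -- case (ii)
    intro v hvr s
    simp only [norm_smul, Real.norm_eq_abs]
    have hle : ‖v‖ ^ 2 * (Real.exp (2 * α * s) - 1) + r ^ 2
        = (r * Real.exp (α * s)) ^ 2 := by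
      rw [hvr]; have := he s; nlinarith
    rw [hle, Real.sqrt_sq (by positivity), div_self (by positivity), abs_one,
      one_mul, hvr]
  · -- case (iii)
    intro v hvr s1 hs1 s2 hs2 h12
    have hn0 : 0 < ‖v‖ := lt_trans hr0 hvr
    have hn2 : 0 < ‖v‖ ^ 2 := by positivity
    have hx : 0 < 1 - r ^ 2 / ‖v‖ ^ 2 := by
      rw [sub_pos, div_lt_one hn2]; nlinarith
    have hc : r ^ 2 - ‖v‖ ^ 2 < 0 := by nlinarith
    have hD : ∀ s : ℝ, s ∈ Set.Ioi (1 / (2 * α) * Real.log (1 - r ^ 2 / ‖v‖ ^ 2)) →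
        0 < ‖v‖ ^ 2 * (Real.exp (2 * α * s) - 1) + r ^ 2 := by
      intro s hs
      have h1 : 1 - r ^ 2 / ‖v‖ ^ 2 < Real.exp (2 * α * s) := by
        have : 2 * α * (1 / (2 * α) * Real.log (1 - r ^ 2 / ‖v‖ ^ 2))
            = Real.log (1 - r ^ 2 / ‖v‖ ^ 2) := by
          field_simp
        calc 1 - r ^ 2 / ‖v‖ ^ 2
            = Real.exp (2 * α * (1 / (2 * α) * Real.log (1 - r ^ 2 / ‖v‖ ^ 2))) := by
              rw [this, Real.exp_log hx]
          _ < Real.exp (2 * α * s) := by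
              apply Real.exp_lt_exp.2
              have := hs
              simp only [Set.mem_Ioi] at this
              nlinarith
      have h2 : ‖v‖ ^ 2 * (1 - r ^ 2 / ‖v‖ ^ 2) = ‖v‖ ^ 2 - r ^ 2 := by
        field_simp
      nlinarith [mul_lt_mul_of_pos_left h1 hn2]
    have hE : Real.exp (2 * α * s1) < Real.exp (2 * α * s2) := by
      apply Real.exp_lt_exp.2; nlinarith
    simp only [norm_smul, Real.norm_eq_abs]
    rw [abs_of_nonneg (by positivity), abs_of_nonneg (by positivity)]
    apply mul_lt_mul_of_pos_right _ hn0
    apply step_aux _ _ _ _ (by positivity) (by positivity) (hD s2 hs2) (hD s1 hs1)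
    rw [mul_pow, mul_pow, he s1, he s2]
    nlinarith [mul_pos (mul_pos (pow_pos hr0 2) (neg_pos.2 hc)) (sub_pos.2 hE)]
end

section
/- Fix α, β > 0, set r = √(α/β), let A ≥ 0 and 0 < r₀ < r. There exists ε₀ > 0 (depending only on α, β, A, r₀) such that for every 0 < ε < ε₀ the following holds: if V : [0, ∞) → ℝ^d is an (ε, A)-characteristic velocity with r₀ ≤ |V(0)| < ρ₂^ε(−A) − ε, then there exists a time t₁ with 0 ≤ t₁ ≤ (ε/(2βr₀²)) ln((r − r₀)/ε) such that |V(t₁)| = ρ₂^ε(−A) − ε. -/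
open Real Set RealInnerProductSpace

private lemma aux_gap (β r ρ s εA : ℝ)
    (h1 : β * ρ * (r ^ 2 - ρ ^ 2) = εA)
    (h2 : 0 ≤ β * (r ^ 2 - ρ ^ 2) * (s * ρ - r)) :
    β * r * (r ^ 2 - ρ ^ 2) ≤ s * εA := by
  calc β * r * (r ^ 2 - ρ ^ 2) ≤ s * (β * ρ * (r ^ 2 - ρ ^ 2)) := by nlinarith [h2]
    _ = s * εA := by rw [h1]

private lemma aux_half (r r₀ ρ : ℝ) (hr : 0 < r) (hr₀ : 0 < r₀) (hρ : 0 < ρ)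
    (h2 : r ^ 2 - ρ ^ 2 < (r - r₀) / 2 * ((3 * r + r₀) / 2)) :
    (r + r₀) / 2 ≤ ρ := by
  nlinarith [sq_nonneg (ρ - (r + r₀) / 2), sq_nonneg (ρ + (r + r₀) / 2)]

private lemma aux_fac (r r₀ ρ φ : ℝ) (hr₀ : 0 < r₀) (hρ : 0 < ρ) (hφr₀ : r₀ ≤ φ)
    (hρhalf : (r + r₀) / 2 ≤ ρ) (hkey : r ^ 2 - ρ ^ 2 < r₀ * (r - r₀) / 2) :
    0 < φ ^ 2 + φ * ρ + ρ ^ 2 - r ^ 2 - 2 * r₀ ^ 2 := by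
  nlinarith [mul_nonneg (sub_nonneg.mpr hφr₀) hρ.le,
    mul_le_mul_of_nonneg_left hρhalf hr₀.le,
    mul_nonneg hr₀.le (sub_nonneg.mpr hφr₀)]

private lemma aux_main (β r r₀ ρ φ : ℝ) (hβ : 0 < β)
    (hfac : 0 < φ ^ 2 + φ * ρ + ρ ^ 2 - r ^ 2 - 2 * r₀ ^ 2) (hφρ : φ < ρ) :
    2 * β * r₀ ^ 2 * (ρ - φ) < (β * r ^ 2 - β * φ ^ 2) * φ - (β * r ^ 2 - β * ρ ^ 2) * ρ := by
  nlinarith [mul_pos hβ (mul_pos (sub_pos.mpr hφρ) hfac)]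

private lemma aux_sqle (a c : ℝ) (ha : 0 ≤ a) (hc : 0 ≤ c) (h : a ^ 2 ≤ c ^ 2) : a ≤ c := by
  nlinarith [sq_nonneg (a - c), sq_nonneg (a + c)]

/-- Fix `α, β > 0`, `r = √(α/β)`, `A ≥ 0`, `0 < r₀ < r`.
Suppose `ρ₂ ε` denotes, for each admissible `ε` (i.e. `0 < ε` with
`εA < 2αr/(3√3)`), the larger zero in `[r/√3, r]` of `ρ ↦ −εA + (α − βρ²)ρ`.
Then there exists `ε₀ > 0` (with every `ε < ε₀` admissible) such that for all
`0 < ε < ε₀`: any `(ε,A)`-characteristic velocity `V` with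
`r₀ ≤ |V(0)| < ρ₂ ε − ε` reaches the value `ρ₂ ε − ε` at some time
`t₁ ∈ [0, (ε/(2βr₀²)) ln((r − r₀)/ε)]`. -/
theorem stmt14 (d : ℕ) (α β A r₀ : ℝ) (hα : 0 < α) (hβ : 0 < β) (hA : 0 ≤ A)
    (r : ℝ) (hr : r = Real.sqrt (α / β)) (hr₀ : 0 < r₀) (hr₀r : r₀ < r)
    (ρ₂ : ℝ → ℝ)
    (hρ₂ : ∀ ε, 0 < ε → ε * A < 2 * α * r / (3 * Real.sqrt 3) →
      (r / Real.sqrt 3 ≤ ρ₂ ε ∧ ρ₂ ε ≤ r ∧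
        -(ε * A) + (α - β * (ρ₂ ε) ^ 2) * ρ₂ ε = 0)) :
    ∃ ε₀ : ℝ, 0 < ε₀ ∧ ε₀ * A ≤ 2 * α * r / (3 * Real.sqrt 3) ∧
      ∀ ε, 0 < ε → ε < ε₀ →
        ∀ V V' : ℝ → EuclideanSpace ℝ (Fin d),
          ContinuousOn V' (Set.Ici 0) →
          (∀ t ∈ Set.Ici (0:ℝ), HasDerivWithinAt V (V' t) (Set.Ici 0) t) →
          (∀ t ∈ Set.Ici (0:ℝ),
            ‖V' t - ((1 / ε) * (α - β * ‖V t‖ ^ 2)) • V t‖ ≤ A) →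
          r₀ ≤ ‖V 0‖ → ‖V 0‖ < ρ₂ ε - ε →
          ∃ t₁ : ℝ, 0 ≤ t₁ ∧
            t₁ ≤ ε / (2 * β * r₀ ^ 2) * Real.log ((r - r₀) / ε) ∧
            ‖V t₁‖ = ρ₂ ε - ε := by
  have hs3 : (0:ℝ) < Real.sqrt 3 := Real.sqrt_pos.mpr (by norm_num)
  have hrpos : 0 < r := by
    rw [hr]; exact Real.sqrt_pos.mpr (div_pos hα hβ)
  have hr2 : β * r ^ 2 = α := by
    rw [hr, Real.sq_sqrt (div_pos hα hβ).le]
    field_simp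
  have hrr₀ : 0 < r - r₀ := sub_pos.mpr hr₀r
  set b : ℝ := 2 * α * r / (3 * Real.sqrt 3) with hbdef
  set c2 : ℝ := β * r * ((r - r₀) / 2 * ((3 * r + r₀) / 2)) / Real.sqrt 3 with hc2def
  set c3 : ℝ := β * r * (r₀ * (r - r₀) / 2) / Real.sqrt 3 with hc3def
  have hbpos : 0 < b := by positivity
  have hc2pos : 0 < c2 := by positivity
  have hc3pos : 0 < c3 := by positivity
  refine ⟨min b (min c2 c3) / (A + 1), by positivity, ?_, ?_⟩
  · have h1 : min b (min c2 c3) ≤ b := min_le_left _ _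
    have h2 : (0:ℝ) < A + 1 := by linarith
    rw [div_mul_eq_mul_div, div_le_iff₀ h2]
    calc min b (min c2 c3) * A ≤ b * A := mul_le_mul_of_nonneg_right h1 hA
      _ ≤ b * (A + 1) := by nlinarith [hbpos]
  intro ε hε hεε₀ V V' hV'c hVd hVb hV0lo hV0hi
  -- basic epsilon bounds
  have hA1 : (0:ℝ) < A + 1 := by linarith
  have hmin : ε * (A + 1) < min b (min c2 c3) := by
    calc ε * (A + 1) < min b (min c2 c3) / (A + 1) * (A + 1) :=
          mul_lt_mul_of_pos_right hεε₀ hA1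
      _ = min b (min c2 c3) := by field_simp
  have hεA : ε * A < min b (min c2 c3) := by
    have h1 : ε * A ≤ ε * (A + 1) := by
      have := mul_le_mul_of_nonneg_left (by linarith : A ≤ A + 1) hε.le
      linarith
    linarith
  have hεAb : ε * A < b := lt_of_lt_of_le hεA (min_le_left _ _)
  have hεAc2 : ε * A < c2 := lt_of_lt_of_le hεA ((min_le_right _ _).trans (min_le_left _ _))
  have hεAc3 : ε * A < c3 := lt_of_lt_of_le hεA ((min_le_right _ _).trans (min_le_right _ _))
  obtain ⟨hρlb, hρub, hρzero⟩ := hρ₂ ε hε hεAb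
  set ρ : ℝ := ρ₂ ε with hρdef
  have hρpos : 0 < ρ := lt_of_lt_of_le (by positivity) hρlb
  have hzero : (α - β * ρ ^ 2) * ρ = ε * A := by linarith
  have hsρ : r ≤ Real.sqrt 3 * ρ := by
    have := (div_le_iff₀ hs3).mp hρlb
    linarith [this]
  have hr2ρ2 : 0 ≤ r ^ 2 - ρ ^ 2 := by
    have := pow_le_pow_left₀ hρpos.le hρub 2
    linarith
  have hβr : 0 < β * r := by positivity
  have hgap : β * r * (r ^ 2 - ρ ^ 2) ≤ Real.sqrt 3 * (ε * A) := by
    refine aux_gap β r ρ _ _ ?_ ?_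
    · linear_combination ρ * hr2 + hzero
    · exact mul_nonneg (mul_nonneg hβ.le hr2ρ2) (sub_nonneg.mpr hsρ)
  have hs3c2 : Real.sqrt 3 * c2 = β * r * ((r - r₀) / 2 * ((3 * r + r₀) / 2)) := by
    rw [hc2def, mul_div_assoc']
    field_simp
  have hs3c3 : Real.sqrt 3 * c3 = β * r * (r₀ * (r - r₀) / 2) := by
    rw [hc3def, mul_div_assoc']
    field_simp
  -- ρ is at least the midpoint (r+r₀)/2
  have hρhalf : (r + r₀) / 2 ≤ ρ := by
    have h1 : Real.sqrt 3 * (ε * A) < Real.sqrt 3 * c2 := mul_lt_mul_of_pos_left hεAc2 hs3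
    rw [hs3c2] at h1
    exact aux_half r r₀ ρ hrpos hr₀ hρpos
      ((mul_lt_mul_iff_right₀ hβr).mp (lt_of_le_of_lt hgap h1))
  -- key smallness: r² − ρ² < r₀(r−r₀)/2
  have hkey : r ^ 2 - ρ ^ 2 < r₀ * (r - r₀) / 2 := by
    have h1 : Real.sqrt 3 * (ε * A) < Real.sqrt 3 * c3 := mul_lt_mul_of_pos_left hεAc3 hs3
    rw [hs3c3] at h1
    exact (mul_lt_mul_iff_right₀ hβr).mp (lt_of_le_of_lt hgap h1)
  -- set-up of the barrier
  set φ₀ : ℝ := ‖V 0‖ with hφ₀def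
  have hφ₀m : φ₀ < ρ - ε := hV0hi
  have hεlt : ε < r - r₀ := by linarith
  set lam : ℝ := 2 * β * r₀ ^ 2 / ε with hlamdef
  have hlampos : 0 < lam := by positivity
  set T : ℝ := ε / (2 * β * r₀ ^ 2) * Real.log ((r - r₀) / ε) with hTdef
  have hlogpos : 0 < Real.log ((r - r₀) / ε) := by
    apply Real.log_pos
    rw [lt_div_iff₀ hε]; linarith
  have hTpos : 0 < T := by positivity
  have hlamT : lam * T = Real.log ((r - r₀) / ε) := by
    rw [hlamdef, hTdef]
    field_simp
  have hexpT : Real.exp (-(lam * T)) = ε / (r - r₀) := by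
    rw [hlamT, Real.exp_neg, Real.exp_log (by positivity)]
    rw [inv_div]
  set B : ℝ → ℝ := fun t => ρ - (ρ - φ₀) * Real.exp (-(lam * t)) with hBdef
  set B' : ℝ → ℝ := fun t => (ρ - φ₀) * lam * Real.exp (-(lam * t)) with hB'def
  have hρφ₀ : 0 < ρ - φ₀ := by linarith
  have hBderiv : ∀ x : ℝ, HasDerivAt B (B' x) x := by
    intro x
    have h1 : HasDerivAt (fun t : ℝ => -(lam * t)) (-lam) x := by
      simpa using (hasDerivAt_id x).const_mul (-lam)
    have h2 := (Real.hasDerivAt_exp (-(lam * x))).comp x h1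
    have h3 := (h2.const_mul (ρ - φ₀)).const_sub ρ
    refine h3.congr_deriv ?_
    simp only [hB'def]
    ring
  have hBge : ∀ x : ℝ, 0 ≤ x → φ₀ ≤ B x := by
    intro x hx
    have h1 : Real.exp (-(lam * x)) ≤ 1 := by
      apply Real.exp_le_one_iff.mpr
      have : 0 ≤ lam * x := mul_nonneg hlampos.le hx
      linarith
    have h2 : (ρ - φ₀) * Real.exp (-(lam * x)) ≤ ρ - φ₀ :=
      mul_le_of_le_one_right hρφ₀.le h1
    simp only [hBdef]
    linarith
  have hBlt : ∀ x : ℝ, B x < ρ := by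
    intro x
    have h1 : 0 < (ρ - φ₀) * Real.exp (-(lam * x)) :=
      mul_pos hρφ₀ (Real.exp_pos _)
    simp only [hBdef]
    linarith
  -- the squared norm function and its derivative
  set u : ℝ → ℝ := fun t => (⟪V t, V t⟫ : ℝ) with hudef
  have hu_eq : ∀ t, u t = ‖V t‖ ^ 2 := fun t => real_inner_self_eq_norm_sq _
  have hVsub : Icc (0:ℝ) T ⊆ Ici (0:ℝ) := fun t ht => ht.1
  have hucont : ContinuousOn u (Icc 0 T) := by
    intro t ht
    exact ((hVd t ht.1).continuousWithinAt.mono hVsub).inner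
      ((hVd t ht.1).continuousWithinAt.mono hVsub)
  have hud : ∀ x ∈ Ico (0:ℝ) T,
      HasDerivWithinAt u (⟪V x, V' x⟫ + ⟪V' x, V x⟫) (Ici x) x := by
    intro x hx
    exact ((hVd x hx.1).mono (Ici_subset_Ici.mpr hx.1)).inner (𝕜 := ℝ)
      ((hVd x hx.1).mono (Ici_subset_Ici.mpr hx.1))
  -- main comparison
  have key : ∀ x ∈ Icc (0:ℝ) T, (B x) ^ 2 ≤ u x := by
    apply image_le_of_deriv_right_lt_deriv_boundary'
      (f := fun t => (B t) ^ 2) (f' := fun t => 2 * B t * B' t)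
      (B := u) (B' := fun x => ⟪V x, V' x⟫ + ⟪V' x, V x⟫)
    · exact fun t _ => (((hBderiv t).pow 2).continuousAt.continuousWithinAt)
    · intro x hx
      have h := ((hBderiv x).pow 2).hasDerivWithinAt (s := Ici x)
      refine h.congr_deriv ?_
      ring
    · rw [hu_eq 0]
      simp only [hBdef]
      rw [mul_zero, neg_zero, Real.exp_zero]
      ring_nf
      exact le_rfl
    · exact hucont
    · exact hud
    · -- the contact-point estimate
      intro x hx hcontact
      have hx0 : (0:ℝ) ≤ x := hx.1
      set φ : ℝ := ‖V x‖ with hφdef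
      have hφsq : φ ^ 2 = (B x) ^ 2 := by rw [hφdef, ← hu_eq x, hcontact]
      have hBxpos : 0 < B x := by linarith [hBge x hx0]
      have hφB : φ = B x := by
        have h2 : (φ - B x) * (φ + B x) = 0 := by linear_combination hφsq
        rcases mul_eq_zero.mp h2 with h | h
        · linarith
        · exfalso
          have h3 : (0:ℝ) ≤ φ := norm_nonneg _
          linarith
      have hφr₀ : r₀ ≤ φ := by rw [hφB]; linarith [hBge x hx0]
      have hφρ : φ < ρ := by rw [hφB]; exact hBlt x
      have hφpos : 0 < φ := lt_of_lt_of_le hr₀ hφr₀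
      -- lower bound on the inner product
      set c : ℝ := (1 / ε) * (α - β * ‖V x‖ ^ 2) with hcdef
      have hsplit : (⟪V' x, V x⟫ : ℝ) = ⟪V' x - c • V x, V x⟫ + c * φ ^ 2 := by
        rw [inner_sub_left, real_inner_smul_left, real_inner_self_eq_norm_sq]
        ring
      have hCS : |(⟪V' x - c • V x, V x⟫ : ℝ)| ≤ A * φ := by
        refine le_trans (abs_real_inner_le_norm _ _) ?_
        exact mul_le_mul_of_nonneg_right (hVb x hx0) (norm_nonneg _)
      have hinlb : c * φ ^ 2 - A * φ ≤ (⟪V' x, V x⟫ : ℝ) := by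
        have := (abs_le.mp hCS).1
        rw [hsplit]; linarith
      have hincomm : (⟪V x, V' x⟫ : ℝ) = ⟪V' x, V x⟫ := real_inner_comm _ _
      -- the quantitative cubic inequality
      have hfac : 0 < φ ^ 2 + φ * ρ + ρ ^ 2 - r ^ 2 - 2 * r₀ ^ 2 :=
        aux_fac r r₀ ρ φ hr₀ hρpos hφr₀ hρhalf hkey
      have main0 := aux_main β r r₀ ρ φ hβ hfac hφρ
      have main : 2 * β * r₀ ^ 2 * (ρ - φ) < (α - β * φ ^ 2) * φ - ε * A := by
        have e1 : (β * r ^ 2 - β * φ ^ 2) * φ - (β * r ^ 2 - β * ρ ^ 2) * ρ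
            = (α - β * φ ^ 2) * φ - ε * A := by
          linear_combination (φ - ρ) * hr2 - hzero
        linarith [e1 ▸ main0]
      have hB'x : B' x = lam * (ρ - B x) := by
        simp only [hB'def, hBdef]
        ring
      have h5 : ε * (2 * B x * B' x) = 2 * φ * (2 * β * r₀ ^ 2 * (ρ - φ)) := by
        rw [hB'x, ← hφB, hlamdef]
        field_simp
        try ring
      have h6 : ε * (2 * (c * φ ^ 2 - A * φ)) = 2 * φ * ((α - β * φ ^ 2) * φ - ε * A) := by
        rw [hcdef, ← hφdef]
        field_simp
        try ring
      have h7 : ε * (2 * B x * B' x) < ε * (2 * (c * φ ^ 2 - A * φ)) := by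
        rw [h5, h6]
        exact mul_lt_mul_of_pos_left main (by positivity)
      have h8 : 2 * B x * B' x < 2 * (c * φ ^ 2 - A * φ) :=
        lt_of_mul_lt_mul_left h7 hε.le
      calc 2 * B x * B' x < 2 * (c * φ ^ 2 - A * φ) := h8
        _ ≤ ⟪V x, V' x⟫ + ⟪V' x, V x⟫ := by rw [hincomm]; linarith
  -- evaluate at T
  have hBT : ρ - ε ≤ B T := by
    have h1 : (ρ - φ₀) * Real.exp (-(lam * T)) ≤ ε := by
      rw [hexpT]
      have h2 : ρ - φ₀ ≤ r - r₀ := by linarith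
      have h3 : (0:ℝ) < ε / (r - r₀) := by positivity
      calc (ρ - φ₀) * (ε / (r - r₀)) ≤ (r - r₀) * (ε / (r - r₀)) :=
            mul_le_mul_of_nonneg_right h2 h3.le
        _ = ε := by field_simp
    simp only [hBdef]
    linarith
  have hVT : ρ - ε ≤ ‖V T‖ := by
    have h1 := key T ⟨hTpos.le, le_refl T⟩
    rw [hu_eq T] at h1
    have hBT0 : 0 ≤ B T := by linarith
    have h2 : B T ≤ ‖V T‖ := aux_sqle _ _ hBT0 (norm_nonneg _) h1
    linarith
  -- intermediate value theorem
  have hVcont : ContinuousOn (fun t => ‖V t‖) (Icc 0 T) := by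
    intro t ht
    exact ((hVd t ht.1).continuousWithinAt.mono hVsub).norm
  have hivt := intermediate_value_Icc hTpos.le hVcont
  have hmem : ρ - ε ∈ Icc (‖V 0‖) (‖V T‖) := ⟨hV0hi.le, hVT⟩
  obtain ⟨t₁, ht₁, hval⟩ := hivt hmem
  exact ⟨t₁, ht₁.1, ht₁.2, hval⟩
end

section
/- Fix α, β > 0, set r = √(α/β), let A ≥ 0 and R₀ > r. There exists ε₀ > 0 (depending only on α, β, A, R₀) such that for every 0 < ε < ε₀ the following holds: if V : [0, ∞) → ℝ^d is an (ε, A)-characteristic velocity with ρ₃^ε(A) + ε < |V(0)| ≤ R₀, then there exists a time t₂ with 0 ≤ t₂ ≤ (ε/(2βr²)) ln((R₀ − r)/ε) such that |V(t₂)| = ρ₃^ε(A) + ε. -/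
open Real Set

set_option maxHeartbeats 1600000

/-- Fix `α, β > 0`, `r = √(α/β)`, `A ≥ 0`, `R₀ > r`.
Suppose `ρ₃ ε` denotes, for each `ε > 0`, the unique zero in `[r,∞)` of
`ρ ↦ εA + (α − βρ²)ρ`. Then there exists `ε₀ > 0` such that for all
`0 < ε < ε₀`: any `(ε,A)`-characteristic velocity `V` with
`ρ₃ ε + ε < |V(0)| ≤ R₀` reaches the value `ρ₃ ε + ε` at some time
`t₂ ∈ [0, (ε/(2βr²)) ln((R₀ − r)/ε)]`. -/
theorem stmt15 (d : ℕ) (α β A R₀ : ℝ) (hα : 0 < α) (hβ : 0 < β) (hA : 0 ≤ A)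
    (r : ℝ) (hr : r = Real.sqrt (α / β)) (hR₀ : r < R₀)
    (ρ₃ : ℝ → ℝ)
    (hρ₃ : ∀ ε, 0 < ε →
      (r ≤ ρ₃ ε ∧ ε * A + (α - β * (ρ₃ ε) ^ 2) * ρ₃ ε = 0)) :
    ∃ ε₀ : ℝ, 0 < ε₀ ∧
      ∀ ε, 0 < ε → ε < ε₀ →
        ∀ V V' : ℝ → EuclideanSpace ℝ (Fin d),
          ContinuousOn V' (Set.Ici 0) →
          (∀ t ∈ Set.Ici (0:ℝ), HasDerivWithinAt V (V' t) (Set.Ici 0) t) →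
          (∀ t ∈ Set.Ici (0:ℝ),
            ‖V' t - ((1 / ε) * (α - β * ‖V t‖ ^ 2)) • V t‖ ≤ A) →
          ρ₃ ε + ε < ‖V 0‖ → ‖V 0‖ ≤ R₀ →
          ∃ t₂ : ℝ, 0 ≤ t₂ ∧
            t₂ ≤ ε / (2 * β * r ^ 2) * Real.log ((R₀ - r) / ε) ∧
            ‖V t₂‖ = ρ₃ ε + ε := by
  have hrpos : 0 < r := by
    rw [hr]; exact Real.sqrt_pos.2 (div_pos hα hβ)
  have hr2 : β * r ^ 2 = α := by
    rw [hr, sq_sqrt (le_of_lt (div_pos hα hβ))]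
    field_simp
  refine ⟨R₀ - r, by linarith, ?_⟩
  intro ε hε hεlt V V' hV'cont hVderiv hbound h0lt h0le
  obtain ⟨hρ₃r, hρ₃eq⟩ := hρ₃ ε hε
  set P := ρ₃ ε with hP
  set k : ℝ := 2 * β * r ^ 2 / ε with hk
  have hkpos : 0 < k := by positivity
  set δ : ℝ := R₀ - P with hδ
  have hδpos : 0 < δ := by
    have : P + ε < R₀ := lt_of_lt_of_le h0lt h0le
    simp only [hδ]; linarith
  set T : ℝ := ε / (2 * β * r ^ 2) * Real.log ((R₀ - r) / ε) with hT
  have hrR : 0 < R₀ - r := by linarith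
  have hlogpos : 0 ≤ Real.log ((R₀ - r) / ε) := by
    apply Real.log_nonneg
    rw [le_div_iff₀ hε]
    linarith
  have hTpos : 0 ≤ T := by
    apply mul_nonneg _ hlogpos
    positivity
  -- boundary function
  set m : ℝ → ℝ := fun t => P + δ * Real.exp (-k * t) with hm
  have hmgt : ∀ t, P < m t := by
    intro t
    have : 0 < δ * Real.exp (-k * t) := by positivity
    simp only [hm]; linarith
  have hmderiv : ∀ t, HasDerivAt m (δ * (Real.exp (-k * t) * -k)) t := by
    intro t
    have h1 : HasDerivAt (fun t : ℝ => -k * t) (-k) t := by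
      simpa using (hasDerivAt_id t).const_mul (-k)
    exact (h1.exp.const_mul δ).const_add P
  set B : ℝ → ℝ := fun t => (m t) ^ 2 with hB
  have hBderiv : ∀ t, HasDerivAt B (2 * m t * (δ * (Real.exp (-k * t) * -k))) t := by
    intro t
    have := (hmderiv t).pow 2
    simpa [hB, Pi.pow_def, mul_comm, mul_assoc, mul_left_comm] using this
  -- the squared norm and its derivative
  set f : ℝ → ℝ := fun t => ‖V t‖ ^ 2 with hf
  set f' : ℝ → ℝ := fun t => 2 * inner ℝ (V t) (V' t) with hf'
  have hVcont : ContinuousOn V (Ici 0) := fun t ht => (hVderiv t ht).continuousWithinAt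
  have hnormcont : ContinuousOn (fun t => ‖V t‖) (Icc 0 T) :=
    (hVcont.mono (Icc_subset_Ici_self)).norm
  have hfcont : ContinuousOn f (Icc 0 T) := by
    simpa [hf, Pi.pow_def] using hnormcont.pow 2
  have hfderiv : ∀ x ∈ Ico (0:ℝ) T, HasDerivWithinAt f (f' x) (Ici x) x := by
    intro x hx
    have hVx : HasDerivWithinAt V (V' x) (Ici x) x :=
      (hVderiv x hx.1).mono (Ici_subset_Ici.2 hx.1)
    have := hVx.inner ℝ hVx
    have h2 : HasDerivWithinAt (fun t => (inner ℝ (V t) (V t) : ℝ)) (2 * inner ℝ (V x) (V' x)) (Ici x) x := by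
      convert this using 1 <;> try rfl
      rw [real_inner_comm (V' x) (V x)]
      ring
    have h3 : (fun t => (inner ℝ (V t) (V t) : ℝ)) = f := by
      funext t
      rw [real_inner_self_eq_norm_sq]
    rw [h3] at h2
    exact h2
  -- initial condition
  have hfa : f 0 ≤ B 0 := by
    have : m 0 = R₀ := by simp [hm, hδ]
    have hB0 : B 0 = R₀ ^ 2 := by rw [hB]; simp only; rw [this]
    rw [hf, hB0]
    simp only
    exact pow_le_pow_left₀ (norm_nonneg _) h0le 2
  -- key differential inequality at contact points
  have key : ∀ x ∈ Ico (0:ℝ) T, f x = B x →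
      f' x < 2 * m x * (δ * (Real.exp (-k * x) * -k)) := by
    intro x hx hcontact
    set ρ := ‖V x‖ with hρ
    have hρeq : ρ = m x := by
      have h1 : ρ ^ 2 = (m x) ^ 2 := hcontact
      have h2 : 0 ≤ ρ := norm_nonneg _
      have h3 : 0 ≤ m x := le_of_lt (lt_of_le_of_lt (le_trans hrpos.le hρ₃r) (hmgt x))
      nlinarith
    have hρgt : P < ρ := hρeq ▸ hmgt x
    have hρpos : 0 < ρ := lt_of_le_of_lt (le_trans hrpos.le hρ₃r) hρgt
    -- bound on inner product
    have hib : (inner ℝ (V x) (V' x) : ℝ) ≤ ρ * A + (1 / ε) * (α - β * ρ ^ 2) * ρ ^ 2 := by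
      have hb := hbound x hx.1
      set c : ℝ := (1 / ε) * (α - β * ‖V x‖ ^ 2) with hc
      have h1 : (inner ℝ (V x) (V' x - c • V x) : ℝ) ≤ ρ * A := by
        calc (inner ℝ (V x) (V' x - c • V x) : ℝ) ≤ ‖V x‖ * ‖V' x - c • V x‖ :=
              real_inner_le_norm _ _
          _ ≤ ρ * A := mul_le_mul_of_nonneg_left hb (norm_nonneg _)
      have h2 : (inner ℝ (V x) (V' x) : ℝ)
          = inner ℝ (V x) (V' x - c • V x) + c * ρ ^ 2 := by
        rw [inner_sub_right, real_inner_smul_right, real_inner_self_eq_norm_sq]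
        ring
      rw [h2, hc]
      have : (1 / ε) * (α - β * ‖V x‖ ^ 2) * ρ ^ 2 = (1 / ε) * (α - β * ρ ^ 2) * ρ ^ 2 := by
        rw [hρ]
      linarith [this ▸ le_refl ((1 / ε) * (α - β * ‖V x‖ ^ 2) * ρ ^ 2), h1]
    -- the cubic strict inequality
    have hcubic : ε * A + (α - β * ρ ^ 2) * ρ < -(2 * β * r ^ 2) * (ρ - P) := by
      have hρr : r < ρ := lt_of_le_of_lt hρ₃r hρgt
      have h1 : 3 * r ^ 2 < ρ ^ 2 + ρ * P + P ^ 2 := by nlinarith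
      have h2 : α - β * (ρ ^ 2 + ρ * P + P ^ 2) < -(2 * β * r ^ 2) := by nlinarith
      have h3 : ε * A + (α - β * ρ ^ 2) * ρ = (ρ - P) * (α - β * (ρ ^ 2 + ρ * P + P ^ 2)) := by
        linear_combination hρ₃eq
      calc ε * A + (α - β * ρ ^ 2) * ρ
          = (ρ - P) * (α - β * (ρ ^ 2 + ρ * P + P ^ 2)) := h3
        _ < (ρ - P) * -(2 * β * r ^ 2) := mul_lt_mul_of_pos_left h2 (sub_pos.2 hρgt)
        _ = -(2 * β * r ^ 2) * (ρ - P) := by ring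
    have hde : δ * Real.exp (-k * x) = ρ - P := by
      have : m x = P + δ * Real.exp (-k * x) := rfl
      rw [← hρeq] at this
      linarith
    have hrhs : 2 * m x * (δ * (Real.exp (-k * x) * -k)) = -2 * k * ρ * (ρ - P) := by
      rw [← hρeq]
      have : δ * (Real.exp (-k * x) * -k) = (ρ - P) * -k := by
        rw [← hde]; ring
      rw [this]; ring
    rw [hrhs]
    have hf'x : f' x = 2 * inner ℝ (V x) (V' x) := rfl
    rw [hf'x]
    have hmain : ρ * A + (1 / ε) * (α - β * ρ ^ 2) * ρ ^ 2 < -(k) * ρ * (ρ - P) := by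
      have h4 : (ρ / ε) * (ε * A + (α - β * ρ ^ 2) * ρ) < (ρ / ε) * (-(2 * β * r ^ 2) * (ρ - P)) :=
        mul_lt_mul_of_pos_left hcubic (by positivity)
      have h5 : (ρ / ε) * (ε * A + (α - β * ρ ^ 2) * ρ) = ρ * A + (1 / ε) * (α - β * ρ ^ 2) * ρ ^ 2 := by
        field_simp [hε.ne']
      have h6 : (ρ / ε) * (-(2 * β * r ^ 2) * (ρ - P)) = -(k) * ρ * (ρ - P) := by
        rw [hk]; field_simp [hε.ne']
      rw [h5, h6] at h4
      exact h4
    linarith [hib, hmain]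
  -- fencing
  have hfence := image_le_of_deriv_right_lt_deriv_boundary hfcont hfderiv hfa hBderiv key
  have hfT : f T ≤ B T := hfence (right_mem_Icc.2 hTpos)
  -- compute exp(-k T)
  have hexp : Real.exp (-k * T) = ε / (R₀ - r) := by
    have hkT : -k * T = -Real.log ((R₀ - r) / ε) := by
      rw [hk, hT]
      have h2βr : (2 * β * r ^ 2) ≠ 0 := by positivity
      field_simp
    rw [hkT, Real.exp_neg, Real.exp_log (by positivity)]
    rw [inv_div]
  have hmT : m T ≤ P + ε := by
    have : m T = P + δ * (ε / (R₀ - r)) := by rw [hm]; simp only; rw [hexp]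
    rw [this]
    have hδle : δ ≤ R₀ - r := by simp only [hδ]; linarith
    have : δ * (ε / (R₀ - r)) ≤ (R₀ - r) * (ε / (R₀ - r)) :=
      mul_le_mul_of_nonneg_right hδle (by positivity)
    have heq : (R₀ - r) * (ε / (R₀ - r)) = ε := by field_simp
    linarith [heq ▸ this]
  have hVT : ‖V T‖ ≤ P + ε := by
    have h1 : ‖V T‖ ^ 2 ≤ (m T) ^ 2 := hfT
    have hmpos : 0 ≤ m T := le_of_lt (lt_of_le_of_lt (le_trans hrpos.le hρ₃r) (hmgt T))
    nlinarith [norm_nonneg (V T)]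
  -- intermediate value theorem
  have hivt := intermediate_value_Icc' hTpos hnormcont
  have hmem : P + ε ∈ Icc ‖V T‖ ‖V 0‖ := ⟨hVT, le_of_lt h0lt⟩
  obtain ⟨t₂, ht₂mem, ht₂⟩ := hivt hmem
  exact ⟨t₂, ht₂mem.1, ht₂mem.2, ht₂⟩
end

section
/- Fix α, β > 0, set r = √(α/β), and let A ≥ 0, L₀ > 0. Let f_in be a Borel probability measure on ℝ^d × ℝ^d with supp f_in ⊆ {(x, v) : |x| ≤ L₀, |v| = r}. For each ε > 0 with εA < 2αr/(3√3), let a^ε : [0, ∞) × ℝ^d → ℝ^d be continuous, with bounded continuous spatial derivatives and ‖a^ε‖_{L∞} ≤ A, and let f^ε(t) be the pushforward of f_in under the flow (x, v) ↦ (X^ε, V^ε)(t; 0, x, v) of the system X′ = V, V′ = a^ε(t, X) + (1/ε)(α − β|V|²)V. Then there exists a constant C, depending only on α, β, A, r and not on ε, t, s, such that W₁(f^ε(t), f^ε(s)) ≤ C|t − s| for all t, s ≥ 0 and all such ε. -/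
open MeasureTheory Real Set Filter Topology

/-- The Monge–Kantorovich–Rubinstein distance `W₁` in dual form: the supremum
of `|∫ φ dμ − ∫ φ dν|` over functions `φ` with Lipschitz constant `≤ 1`. -/
noncomputable def W1dual {X : Type*} [PseudoMetricSpace X]
    [MeasurableSpace X] (μ ν : Measure X) : ℝ :=
  sSup {c | ∃ φ : X → ℝ, LipschitzWith 1 φ ∧
    c = |(∫ x, φ x ∂μ) - ∫ x, φ x ∂ν|}


lemma upper_inv {φ ψ : ℝ → ℝ} {c : ℝ}
    (hd : ∀ τ ∈ Ici (0:ℝ), HasDerivWithinAt φ (ψ τ) (Ici 0) τ)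
    (h0 : φ 0 ≤ c) (hb : ∀ τ ∈ Ici (0:ℝ), φ τ = c → ψ τ < 0) :
    ∀ τ ∈ Ici (0:ℝ), φ τ ≤ c := by
  intro τ hτ
  have H := image_le_of_deriv_right_lt_deriv_boundary' (f := φ) (f' := ψ)
    (a := 0) (b := τ) (B := fun _ => c) (B' := fun _ => 0)
    (fun x hx => ((hd x hx.1).continuousWithinAt).mono Icc_subset_Ici_self)
    (fun x hx => (hd x hx.1).mono (Ici_subset_Ici.mpr hx.1))
    h0 continuousOn_const
    (fun x _ => hasDerivWithinAt_const x _ c)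
    (fun x hx hfx => hb x hx.1 hfx)
  exact H (right_mem_Icc.mpr hτ)

lemma lower_inv {φ ψ : ℝ → ℝ} {c : ℝ}
    (hd : ∀ τ ∈ Ici (0:ℝ), HasDerivWithinAt φ (ψ τ) (Ici 0) τ)
    (h0 : c ≤ φ 0) (hb : ∀ τ ∈ Ici (0:ℝ), φ τ = c → 0 < ψ τ) :
    ∀ τ ∈ Ici (0:ℝ), c ≤ φ τ := by
  have H := upper_inv (φ := fun τ => -φ τ) (ψ := fun τ => -ψ τ) (c := -c)
    (fun τ hτ => (hd τ hτ).neg) (by simpa using h0)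
    (fun τ hτ h => by
      simp only [neg_eq_iff_eq_neg, neg_neg] at h ⊢
      exact neg_neg_iff_pos.mpr (hb τ hτ (by linarith)))
  intro τ hτ
  have h2 : -φ τ ≤ -c := H τ hτ
  linarith

lemma arithU {α β A ε r : ℝ} (hα : 0 < α) (hβ : 0 < β) (hA : 0 ≤ A) (hε : 0 < ε)
    (hr : 0 < r) (hβr : β * r ^ 2 = α) (hεA : ε * A < 2 * α * r / (3 * Real.sqrt 3)) :
    ε * A * Real.sqrt (r ^ 2 + min (3 * r ^ 2) (2 * (A + 1) * ε / (β * r)))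
      < β * min (3 * r ^ 2) (2 * (A + 1) * ε / (β * r))
        * (r ^ 2 + min (3 * r ^ 2) (2 * (A + 1) * ε / (β * r))) := by
  have h3 : (1:ℝ) ≤ Real.sqrt 3 := by
    rw [show (1:ℝ) = Real.sqrt 1 by simp]
    exact Real.sqrt_le_sqrt (by norm_num)
  set m := min (3 * r ^ 2) (2 * (A + 1) * ε / (β * r)) with hm
  have hm0 : 0 < m := lt_min (by positivity) (by positivity)
  have hc0 : (0:ℝ) < r ^ 2 + m := by positivity
  have hs := Real.sq_sqrt hc0.le
  have hsnn := Real.sqrt_nonneg (r ^ 2 + m)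
  have hsl : r ≤ Real.sqrt (r ^ 2 + m) := by
    nlinarith [hs, hsnn, hm0, sq_nonneg (Real.sqrt (r ^ 2 + m) - r)]
  rcases min_cases (3 * r ^ 2) (2 * (A + 1) * ε / (β * r)) with ⟨he, hle⟩ | ⟨he, hle⟩
  · have hsu : Real.sqrt (r ^ 2 + m) = 2 * r := by
      rw [hm, he, show r ^ 2 + 3 * r ^ 2 = (2*r)^2 by ring, Real.sqrt_sq (by positivity)]
    rw [hsu, hm, he]
    have h1 : ε * A * (2 * r) < (2 * α * r / (3 * Real.sqrt 3)) * (2 * r) := by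
      rcases hA.lt_or_eq with h | h
      · exact mul_lt_mul_of_pos_right hεA (by positivity)
      · rw [← h] at hεA ⊢
        simp only [mul_zero, zero_mul]
        positivity
    have h2 : (2 * α * r / (3 * Real.sqrt 3)) * (2 * r) ≤ 4 * α * r ^ 2 := by
      rw [div_mul_eq_mul_div, div_le_iff₀ (by positivity)]
      nlinarith [mul_pos hα (mul_pos hr hr), h3]
    nlinarith [mul_pos (mul_pos hα hr) hr]
  · have hbm : β * m * r = 2 * (A + 1) * ε := by
      rw [hm, he]
      field_simp
    have key : β * m * (r ^ 2 + m) ≥ 2 * (A + 1) * ε * Real.sqrt (r ^ 2 + m) := by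
      calc β * m * (r ^ 2 + m) = β * m * (Real.sqrt (r ^ 2 + m))^2 := by rw [hs]
        _ ≥ β * m * (r * Real.sqrt (r ^ 2 + m)) := by
            nlinarith [mul_le_mul_of_nonneg_left hsl
              (mul_nonneg (mul_nonneg hβ.le hm0.le) hsnn)]
        _ = 2 * (A + 1) * ε * Real.sqrt (r ^ 2 + m) := by rw [← hbm]; ring
    have hspos : 0 < Real.sqrt (r ^ 2 + m) := lt_of_lt_of_le hr hsl
    nlinarith [mul_pos hε hspos, mul_nonneg hA (mul_pos hε hspos).le]

lemma arithL {α β A ε r : ℝ} (hα : 0 < α) (hβ : 0 < β) (hA : 0 ≤ A) (hε : 0 < ε)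
    (hr : 0 < r) (hβr : β * r ^ 2 = α) (hεA : ε * A < 2 * α * r / (3 * Real.sqrt 3)) :
    r ^ 2 / 3 ≤ r ^ 2 - min (2 * r ^ 2 / 3) (Real.sqrt 3 * (A + 1) * ε / (β * r)) ∧
    ε * A * Real.sqrt (r ^ 2 - min (2 * r ^ 2 / 3) (Real.sqrt 3 * (A + 1) * ε / (β * r)))
      < β * min (2 * r ^ 2 / 3) (Real.sqrt 3 * (A + 1) * ε / (β * r))
        * (r ^ 2 - min (2 * r ^ 2 / 3) (Real.sqrt 3 * (A + 1) * ε / (β * r))) := by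
  have s3 : Real.sqrt 3 * Real.sqrt 3 = 3 := Real.mul_self_sqrt (by norm_num)
  have s3pos : 0 < Real.sqrt 3 := Real.sqrt_pos.mpr (by norm_num)
  set m := min (2 * r ^ 2 / 3) (Real.sqrt 3 * (A + 1) * ε / (β * r)) with hm
  have hm0 : 0 < m := lt_min (by positivity) (by positivity)
  have hml : m ≤ 2 * r ^ 2 / 3 := min_le_left _ _
  have hcl : r ^ 2 / 3 ≤ r ^ 2 - m := by linarith
  refine ⟨hcl, ?_⟩
  have hc0 : (0:ℝ) < r ^ 2 - m := lt_of_lt_of_le (by positivity) hcl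
  have hs := Real.sq_sqrt hc0.le
  have hsnn := Real.sqrt_nonneg (r ^ 2 - m)
  have hsl : r / Real.sqrt 3 ≤ Real.sqrt (r ^ 2 - m) := by
    have h1 : (r / Real.sqrt 3) ^ 2 ≤ r ^ 2 - m := by
      rw [div_pow]
      rw [show Real.sqrt 3 ^ 2 = 3 by rw [sq]; exact s3]
      linarith
    nlinarith [sq_nonneg (Real.sqrt (r ^ 2 - m) - r / Real.sqrt 3),
      div_nonneg hr.le s3pos.le]
  rcases min_cases (2 * r ^ 2 / 3) (Real.sqrt 3 * (A + 1) * ε / (β * r)) with ⟨he, hle⟩ | ⟨he, hle⟩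
  · have hce : r ^ 2 - m = r ^ 2 / 3 := by rw [hm, he]; ring
    have hsu : Real.sqrt (r ^ 2 - m) = r / Real.sqrt 3 := by
      rw [hce, show r ^ 2 / 3 = (r / Real.sqrt 3) ^ 2 by
        rw [div_pow, show Real.sqrt 3 ^ 2 = 3 by rw [sq]; exact s3]]
      exact Real.sqrt_sq (by positivity)
    rw [hsu, hce, hm, he]
    have h1 : ε * A * (r / Real.sqrt 3) < (2 * α * r / (3 * Real.sqrt 3)) * (r / Real.sqrt 3) :=
      mul_lt_mul_of_pos_right hεA (by positivity)
    have h2 : (2 * α * r / (3 * Real.sqrt 3)) * (r / Real.sqrt 3) = 2 * α * r ^ 2 / 9 := by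
      have h9 : (3 * Real.sqrt 3) * Real.sqrt 3 = 9 := by rw [mul_assoc, s3]; norm_num
      rw [div_mul_div_comm, h9]; ring
    rw [h2] at h1
    nlinarith [h1]
  · have hbm : β * m * r = Real.sqrt 3 * (A + 1) * ε := by
      rw [hm, he]; field_simp
    have hspos : 0 < Real.sqrt (r ^ 2 - m) := Real.sqrt_pos.mpr hc0
    have key : (A + 1) * ε * Real.sqrt (r ^ 2 - m) ≤ β * m * (r ^ 2 - m) := by
      have h1 : β * m * (Real.sqrt (r ^ 2 - m) * (r / Real.sqrt 3))
          ≤ β * m * (r ^ 2 - m) := by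
        have hss : Real.sqrt (r ^ 2 - m) * Real.sqrt (r ^ 2 - m) = r ^ 2 - m :=
          Real.mul_self_sqrt hc0.le
        have h1' := mul_le_mul_of_nonneg_left hsl
          (mul_nonneg (mul_nonneg hβ.le hm0.le) hsnn)
        have e : β * m * (Real.sqrt (r ^ 2 - m) * Real.sqrt (r ^ 2 - m))
            = β * m * (r ^ 2 - m) := by rw [hss]
        linarith [h1', e]
      have h2 : β * m * (Real.sqrt (r ^ 2 - m) * (r / Real.sqrt 3))
          = (A + 1) * ε * Real.sqrt (r ^ 2 - m) := by
        have e1 : β * m * (Real.sqrt (r ^ 2 - m) * (r / Real.sqrt 3))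
            = (β * m * r) * Real.sqrt (r ^ 2 - m) / Real.sqrt 3 := by ring
        rw [e1, hbm]
        field_simp
      linarith [h2 ▸ h1]
    nlinarith [mul_pos hε hspos, mul_nonneg hA (mul_pos hε hspos).le]

section
variable {d : ℕ}
local notation "E" => EuclideanSpace ℝ (Fin d)

set_option maxHeartbeats 1000000 in
lemma traj {α β A ε r : ℝ} (hα : 0 < α) (hβ : 0 < β) (hA : 0 ≤ A) (hε : 0 < ε)
    (hr : 0 < r) (hβr : β * r ^ 2 = α) (hεA : ε * A < 2 * α * r / (3 * Real.sqrt 3))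
    (Y : ℝ → E × E) (b : ℝ → E) (hb : ∀ t, ‖b t‖ ≤ A)
    (hY : ∀ t ∈ Ici (0:ℝ), HasDerivWithinAt Y
      ((Y t).2, b t + ((1/ε) * (α - β * ‖(Y t).2‖ ^ 2)) • (Y t).2) (Ici 0) t)
    (h0 : ‖(Y 0).2‖ = r) :
    ∀ u ∈ Ici (0:ℝ), ∀ v ∈ Ici (0:ℝ), u ≤ v →
      ‖Y v - Y u‖ ≤ (2 * r + A + 4 * (A + 1)) * (v - u) := by
  classical
  set V : ℝ → E := fun s => (Y s).2 with hV
  set W : ℝ → E := fun s => b s + ((1/ε) * (α - β * ‖V s‖ ^ 2)) • V s with hW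
  have hVd : ∀ t ∈ Ici (0:ℝ), HasDerivWithinAt V (W t) (Ici 0) t := by
    intro t ht
    exact (ContinuousLinearMap.snd ℝ E E).hasFDerivAt.comp_hasDerivWithinAt t (hY t ht)
  have hφd : ∀ t ∈ Ici (0:ℝ),
      HasDerivWithinAt (fun s => ‖V s‖ ^ 2) (2 * (inner ℝ (V t) (W t) : ℝ)) (Ici 0) t :=
    fun t ht => (hVd t ht).norm_sq
  set mU := min (3 * r ^ 2) (2 * (A + 1) * ε / (β * r)) with hmU
  set mL := min (2 * r ^ 2 / 3) (Real.sqrt 3 * (A + 1) * ε / (β * r)) with hmL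
  have hU := arithU hα hβ hA hε hr hβr hεA
  have hLL := arithL hα hβ hA hε hr hβr hεA
  rw [← hmU] at hU
  rw [← hmL] at hLL
  have hmU0 : 0 < mU := lt_min (by positivity) (by positivity)
  have hmL0 : 0 < mL := lt_min (by positivity) (by positivity)
  have hcL0 : (0:ℝ) < r ^ 2 - mL := lt_of_lt_of_le (by positivity) hLL.1
  have hφ0 : ‖V 0‖ ^ 2 = r ^ 2 := by simp only [hV]; rw [h0]
  have band : ∀ τ ∈ Ici (0:ℝ), r ^ 2 - mL ≤ ‖V τ‖ ^ 2 ∧ ‖V τ‖ ^ 2 ≤ r ^ 2 + mU := by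
    have hup : ∀ τ ∈ Ici (0:ℝ), ‖V τ‖ ^ 2 ≤ r ^ 2 + mU := by
      apply upper_inv hφd (by rw [hφ0]; linarith)
      intro τ _ hc
      have hVn : ‖V τ‖ = Real.sqrt (r ^ 2 + mU) := by
        rw [← hc, Real.sqrt_sq (norm_nonneg _)]
      have hinner : (inner ℝ (V τ) (W τ) : ℝ)
          = inner ℝ (V τ) (b τ) + (1/ε) * (α - β * ‖V τ‖ ^ 2) * ‖V τ‖ ^ 2 := by
        simp only [hW]
        rw [inner_add_right, real_inner_smul_right, real_inner_self_eq_norm_sq]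
      have hib : (inner ℝ (V τ) (b τ) : ℝ) ≤ Real.sqrt (r ^ 2 + mU) * A := by
        calc (inner ℝ (V τ) (b τ) : ℝ) ≤ ‖V τ‖ * ‖b τ‖ := real_inner_le_norm _ _
          _ ≤ Real.sqrt (r ^ 2 + mU) * A := by
              rw [hVn]
              exact mul_le_mul_of_nonneg_left (hb τ) (Real.sqrt_nonneg _)
      have hcoef : α - β * ‖V τ‖ ^ 2 = -(β * mU) := by rw [hc]; linarith [hβr]
      rw [hinner, hcoef, hc]
      have h3 : Real.sqrt (r ^ 2 + mU) * A < (β * mU * (r ^ 2 + mU)) / ε := by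
        rw [lt_div_iff₀ hε]
        nlinarith [hU]
      have e : (1/ε) * -(β * mU) * (r ^ 2 + mU) = -((β * mU * (r ^ 2 + mU)) / ε) := by ring
      rw [e]
      linarith [hib]
    have hlo : ∀ τ ∈ Ici (0:ℝ), r ^ 2 - mL ≤ ‖V τ‖ ^ 2 := by
      apply lower_inv hφd (by rw [hφ0]; linarith)
      intro τ _ hc
      have hVn : ‖V τ‖ = Real.sqrt (r ^ 2 - mL) := by
        rw [← hc, Real.sqrt_sq (norm_nonneg _)]
      have hinner : (inner ℝ (V τ) (W τ) : ℝ)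
          = inner ℝ (V τ) (b τ) + (1/ε) * (α - β * ‖V τ‖ ^ 2) * ‖V τ‖ ^ 2 := by
        simp only [hW]
        rw [inner_add_right, real_inner_smul_right, real_inner_self_eq_norm_sq]
      have hib : -(Real.sqrt (r ^ 2 - mL) * A) ≤ (inner ℝ (V τ) (b τ) : ℝ) := by
        have h1 : |(inner ℝ (V τ) (b τ) : ℝ)| ≤ ‖V τ‖ * ‖b τ‖ := abs_real_inner_le_norm _ _
        have h2 : ‖V τ‖ * ‖b τ‖ ≤ Real.sqrt (r ^ 2 - mL) * A := by
          rw [hVn]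
          exact mul_le_mul_of_nonneg_left (hb τ) (Real.sqrt_nonneg _)
        have h3 := neg_abs_le (inner ℝ (V τ) (b τ) : ℝ)
        linarith
      have hcoef : α - β * ‖V τ‖ ^ 2 = β * mL := by rw [hc]; linarith [hβr]
      rw [hinner, hcoef, hc]
      have h3 : Real.sqrt (r ^ 2 - mL) * A < (β * mL * (r ^ 2 - mL)) / ε := by
        rw [lt_div_iff₀ hε]
        nlinarith [hLL.2]
      have e : (1/ε) * (β * mL) * (r ^ 2 - mL) = (β * mL * (r ^ 2 - mL)) / ε := by ring
      rw [e]
      linarith [hib]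
    exact fun τ hτ => ⟨hlo τ hτ, hup τ hτ⟩
  have sqrt3le2 : Real.sqrt 3 ≤ 2 := by
    rw [show (2:ℝ) = Real.sqrt 4 by
      rw [show (4:ℝ) = 2^2 by norm_num, Real.sqrt_sq (by norm_num : (0:ℝ) ≤ 2)]]
    exact Real.sqrt_le_sqrt (by norm_num)
  have hVle : ∀ τ ∈ Ici (0:ℝ), ‖V τ‖ ≤ 2 * r := by
    intro τ hτ
    have h1 := (band τ hτ).2
    have h2 : mU ≤ 3 * r ^ 2 := min_le_left _ _
    have h3 : ‖V τ‖ ^ 2 ≤ (2 * r) ^ 2 := by nlinarith [h1, h2]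
    calc ‖V τ‖ = Real.sqrt (‖V τ‖ ^ 2) := (Real.sqrt_sq (norm_nonneg _)).symm
      _ ≤ Real.sqrt ((2 * r) ^ 2) := Real.sqrt_le_sqrt h3
      _ = 2 * r := Real.sqrt_sq (by positivity)
  have hcoefle : ∀ τ ∈ Ici (0:ℝ), |(1/ε) * (α - β * ‖V τ‖ ^ 2)| ≤ 2 * (A + 1) / r := by
    intro τ hτ
    obtain ⟨hl, hu⟩ := band τ hτ
    have h1 : α - β * ‖V τ‖ ^ 2 ≤ β * mL := by
      have := mul_le_mul_of_nonneg_left hl hβ.le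
      linarith [hβr]
    have h2 : -(β * mU) ≤ α - β * ‖V τ‖ ^ 2 := by
      have := mul_le_mul_of_nonneg_left hu hβ.le
      linarith [hβr]
    have h3 : β * mL ≤ 2 * (A + 1) * ε / r := by
      have hmr := min_le_right (2 * r ^ 2 / 3) (Real.sqrt 3 * (A + 1) * ε / (β * r))
      have h4 : β * (Real.sqrt 3 * (A + 1) * ε / (β * r)) = Real.sqrt 3 * (A + 1) * ε / r := by
        field_simp
      have h5 : β * mL ≤ Real.sqrt 3 * (A + 1) * ε / r := by
        rw [← h4]; exact mul_le_mul_of_nonneg_left hmr hβ.le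
      have h6 : Real.sqrt 3 * (A + 1) * ε / r ≤ 2 * (A + 1) * ε / r := by
        gcongr
      linarith
    have h3' : β * mU ≤ 2 * (A + 1) * ε / r := by
      have hmr := min_le_right (3 * r ^ 2) (2 * (A + 1) * ε / (β * r))
      have h4 : β * (2 * (A + 1) * ε / (β * r)) = 2 * (A + 1) * ε / r := by
        field_simp
      rw [← h4]; exact mul_le_mul_of_nonneg_left hmr hβ.le
    have habs : |α - β * ‖V τ‖ ^ 2| ≤ 2 * (A + 1) * ε / r := by
      rw [abs_le]; constructor <;> linarith
    have he : |(1/ε) * (α - β * ‖V τ‖ ^ 2)| = |α - β * ‖V τ‖ ^ 2| / ε := by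
      rw [abs_mul, abs_of_pos (by positivity : (0:ℝ) < 1/ε)]; ring
    rw [he, div_le_iff₀ hε]
    have : 2 * (A + 1) / r * ε = 2 * (A + 1) * ε / r := by ring
    linarith
  have hWle : ∀ τ ∈ Ici (0:ℝ), ‖W τ‖ ≤ A + 4 * (A + 1) := by
    intro τ hτ
    simp only [hW]
    calc ‖b τ + ((1/ε) * (α - β * ‖V τ‖ ^ 2)) • V τ‖
        ≤ ‖b τ‖ + ‖((1/ε) * (α - β * ‖V τ‖ ^ 2)) • V τ‖ := norm_add_le _ _
      _ = ‖b τ‖ + |(1/ε) * (α - β * ‖V τ‖ ^ 2)| * ‖V τ‖ := by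
          rw [norm_smul, Real.norm_eq_abs]
      _ ≤ A + (2 * (A + 1) / r) * (2 * r) := by
          apply add_le_add (hb τ)
          exact mul_le_mul (hcoefle τ hτ) (hVle τ hτ) (norm_nonneg _) (by positivity)
      _ = A + 4 * (A + 1) := by field_simp; ring
  intro u hu v hv huv
  have key := norm_image_sub_le_of_norm_deriv_le_segment'
    (f := Y) (f' := fun τ => (V τ, W τ)) (a := u) (b := v)
    (C := 2 * r + A + 4 * (A + 1))
    (fun x hx => (hY x (le_trans hu hx.1)).mono (fun y hy => le_trans hu hy.1))
    (fun x hx => by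
      have hx0 : x ∈ Ici (0:ℝ) := le_trans hu hx.1
      rw [Prod.norm_def]
      apply max_le
      · have := hVle x hx0; simp only; linarith
      · have := hWle x hx0; simp only; linarith)
    v (right_mem_Icc.mpr huv)
  exact key
end



lemma W1dual_comm {X : Type*} [PseudoMetricSpace X] [MeasurableSpace X]
    (μ ν : Measure X) : W1dual μ ν = W1dual ν μ := by
  unfold W1dual
  congr 1
  ext c
  constructor <;> rintro ⟨φ, h1, h2⟩ <;> exact ⟨φ, h1, by rw [h2, abs_sub_comm]⟩

lemma W1dual_zero_right {X : Type*} [PseudoMetricSpace X] [MeasurableSpace X]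
    (μ : Measure X) [IsProbabilityMeasure μ] : W1dual μ 0 = 0 := by
  unfold W1dual
  apply Real.sSup_of_not_bddAbove
  rintro ⟨x, hx⟩
  have h1 : ∀ k : ℝ, |k| ∈ {c | ∃ φ : X → ℝ, LipschitzWith 1 φ ∧
      c = |(∫ y, φ y ∂μ) - ∫ y, φ y ∂(0 : Measure X)|} := by
    intro k
    refine ⟨fun _ => k, (LipschitzWith.const k).weaken zero_le_one, ?_⟩
    simp [integral_const, measure_univ]
  have h2 := hx (h1 (|x| + 1))
  have h3 : |(|x| + 1)| = |x| + 1 := abs_of_nonneg (by positivity)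
  rw [h3] at h2
  linarith [le_abs_self x]

lemma W1dual_zero_zero {X : Type*} [PseudoMetricSpace X] [MeasurableSpace X] :
    W1dual (0 : Measure X) (0 : Measure X) = 0 := by
  unfold W1dual
  have h : {c | ∃ φ : X → ℝ, LipschitzWith 1 φ ∧
      c = |(∫ x, φ x ∂(0 : Measure X)) - ∫ x, φ x ∂(0 : Measure X)|} = {0} := by
    ext c
    simp only [mem_setOf_eq, mem_singleton_iff]
    constructor
    · rintro ⟨φ, _, rfl⟩; simp
    · rintro rfl
      exact ⟨fun _ => 0, (LipschitzWith.const 0).weaken zero_le_one, by simp⟩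
  rw [h, csSup_singleton]

/-- Fix `α, β > 0`, `r = √(α/β)`, `A ≥ 0`, `L₀ > 0`. Let
`f_in` be a Borel probability measure supported in `{|x| ≤ L₀, |v| = r}`. For
each `ε > 0` with `εA < 2αr/(3√3)`, given a continuous field `a^ε` with
bounded continuous spatial derivatives and `‖a^ε‖_∞ ≤ A`, let `f^ε(t)` be the
pushforward of `f_in` under the time-`t` flow `Z ε t` of
`X′ = V, V′ = a^ε(t,X) + (1/ε)(α − β|V|²)V`. Then there is a constant `C`
(independent of `ε, t, s`) with `W₁(f^ε(t), f^ε(s)) ≤ C|t − s|` for all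
`t, s ≥ 0` and all such `ε`. -/
theorem stmt16 (d : ℕ) (α β A L₀ : ℝ) (hα : 0 < α) (hβ : 0 < β) (hA : 0 ≤ A)
    (hL₀ : 0 < L₀) (r : ℝ) (hr : r = Real.sqrt (α / β))
    (fin : Measure (EuclideanSpace ℝ (Fin d) × EuclideanSpace ℝ (Fin d)))
    [IsProbabilityMeasure fin]
    (hsupp : fin ({p | ‖p.1‖ ≤ L₀ ∧ ‖p.2‖ = r}ᶜ) = 0)
    (a : ℝ → ℝ → EuclideanSpace ℝ (Fin d) → EuclideanSpace ℝ (Fin d))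
    (Z : ℝ → ℝ → EuclideanSpace ℝ (Fin d) × EuclideanSpace ℝ (Fin d) →
      EuclideanSpace ℝ (Fin d) × EuclideanSpace ℝ (Fin d))
    (ha : ∀ ε, 0 < ε → ε * A < 2 * α * r / (3 * Real.sqrt 3) →
      (Continuous fun q : ℝ × EuclideanSpace ℝ (Fin d) => a ε q.1 q.2) ∧
      (∀ t, ContDiff ℝ 1 (a ε t)) ∧
      (∃ C₁, ∀ t x, ‖fderiv ℝ (a ε t) x‖ ≤ C₁) ∧
      (∀ t x, ‖a ε t x‖ ≤ A))
    (hZ0 : ∀ ε, 0 < ε → ε * A < 2 * α * r / (3 * Real.sqrt 3) →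
      ∀ p, Z ε 0 p = p)
    (hZode : ∀ ε, 0 < ε → ε * A < 2 * α * r / (3 * Real.sqrt 3) →
      ∀ p, ∀ t ∈ Set.Ici (0:ℝ),
        HasDerivWithinAt (fun s => Z ε s p)
          ((Z ε t p).2,
            a ε t (Z ε t p).1 +
              ((1 / ε) * (α - β * ‖(Z ε t p).2‖ ^ 2)) • (Z ε t p).2)
          (Set.Ici 0) t) :
    ∃ C : ℝ, ∀ ε, 0 < ε → ε * A < 2 * α * r / (3 * Real.sqrt 3) →
      ∀ t ∈ Set.Ici (0:ℝ), ∀ s ∈ Set.Ici (0:ℝ),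
        W1dual (fin.map (Z ε t)) (fin.map (Z ε s)) ≤ C * |t - s| := by
  have hr0 : 0 < r := by
    rw [hr]; exact Real.sqrt_pos.mpr (by positivity)
  have hβr : β * r ^ 2 = α := by
    rw [hr, Real.sq_sqrt (by positivity : (0:ℝ) ≤ α / β)]
    field_simp
  set Cs := 2 * r + A + 4 * (A + 1) with hCs
  have hCs0 : 0 < Cs := by positivity
  refine ⟨Cs, ?_⟩
  have hae : ∀ᵐ p ∂fin, ‖p.1‖ ≤ L₀ ∧ ‖p.2‖ = r := by
    rw [ae_iff, ← Set.compl_setOf]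
    exact hsupp
  have key : ∀ ε, 0 < ε → ε * A < 2 * α * r / (3 * Real.sqrt 3) →
      ∀ s t : ℝ, 0 ≤ s → s ≤ t →
      W1dual (fin.map (Z ε t)) (fin.map (Z ε s)) ≤ Cs * (t - s) := by
    intro ε hε hεA s t hs hst
    have ht : (0:ℝ) ≤ t := hs.trans hst
    have hb0 : (0:ℝ) ≤ Cs * (t - s) := mul_nonneg hCs0.le (by linarith)
    have hmain : ∀ p : EuclideanSpace ℝ (Fin d) × EuclideanSpace ℝ (Fin d), ‖p.2‖ = r →
        ∀ u, 0 ≤ u → ∀ v, u ≤ v → ‖Z ε v p - Z ε u p‖ ≤ Cs * (v - u) := by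
      intro p hp u hu v huv
      exact traj hα hβ hA hε hr0 hβr hεA (fun τ => Z ε τ p)
        (fun τ => a ε τ (Z ε τ p).1) (fun τ => (ha ε hε hεA).2.2.2 τ _)
        (fun τ hτ => hZode ε hε hεA p τ hτ)
        (by show ‖(Z ε 0 p).2‖ = r; rw [hZ0 ε hε hεA p]; exact hp)
        u hu v (le_trans hu huv) huv
    by_cases hmt : AEMeasurable (Z ε t) fin
    · by_cases hms : AEMeasurable (Z ε s) fin
      · apply Real.sSup_le _ hb0
        rintro c ⟨φ, hφ, rfl⟩
        have hφm : ∀ ν : Measure (EuclideanSpace ℝ (Fin d) × EuclideanSpace ℝ (Fin d)),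
            AEStronglyMeasurable φ ν := fun ν => hφ.continuous.aestronglyMeasurable
        have hφint : ∀ u, 0 ≤ u → AEMeasurable (Z ε u) fin →
            Integrable (fun p => φ (Z ε u p)) fin := by
          intro u hu hm
          have hmeas : AEStronglyMeasurable (fun p => φ (Z ε u p)) fin :=
            (hφ.continuous.measurable.comp_aemeasurable hm).aestronglyMeasurable
          apply Integrable.mono' (integrable_const (|φ 0| + (max L₀ r + Cs * u))) hmeas
          filter_upwards [hae] with p hp
          have h2 := hmain p hp.2 0 le_rfl u hu
          rw [hZ0 ε hε hεA p] at h2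
          have h3 : ‖p‖ ≤ max L₀ r := by
            rw [Prod.norm_def]
            exact max_le_max hp.1 (le_of_eq hp.2)
          have h1 : ‖Z ε u p‖ ≤ max L₀ r + Cs * u := by
            have h5 := norm_sub_norm_le (Z ε u p) p
            simp only [sub_zero] at h2
            linarith
          have h6 := hφ.dist_le_mul (Z ε u p) 0
          rw [Real.dist_eq, dist_zero_right] at h6
          have h7 := abs_sub_abs_le_abs_sub (φ (Z ε u p)) (φ 0)
          simp only [Real.norm_eq_abs]
          push_cast at h6
          linarith
        have h1 := hφint t ht hmt
        have h2 := hφint s hs hms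
        rw [integral_map hmt (hφm _), integral_map hms (hφm _), ← integral_sub h1 h2]
        have h3 := norm_integral_le_integral_norm
          (f := fun p => φ (Z ε t p) - φ (Z ε s p)) (μ := fin)
        simp only [Real.norm_eq_abs] at h3
        have h4 : ∫ p, |φ (Z ε t p) - φ (Z ε s p)| ∂fin
            ≤ ∫ _, Cs * (t - s) ∂fin := by
          apply integral_mono_ae ((h1.sub h2).abs) (integrable_const _)
          filter_upwards [hae] with p hp
          have h5 := hmain p hp.2 s hs t hst
          have h6 := hφ.dist_le_mul (Z ε t p) (Z ε s p)
          rw [Real.dist_eq, dist_eq_norm] at h6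
          push_cast at h6
          simp only [Pi.sub_apply]
          linarith
        rw [integral_const] at h4
        simp only [probReal_univ, measure_univ, ENNReal.toReal_one, one_smul, smul_eq_mul] at h4
        linarith
      · have h0 : fin.map (Z ε s) = 0 := Measure.map_of_not_aemeasurable hms
        haveI : IsProbabilityMeasure (fin.map (Z ε t)) := Measure.isProbabilityMeasure_map hmt
        rw [h0, W1dual_zero_right]
        exact hb0
    · have h0 : fin.map (Z ε t) = 0 := Measure.map_of_not_aemeasurable hmt
      by_cases hms : AEMeasurable (Z ε s) fin
      · haveI : IsProbabilityMeasure (fin.map (Z ε s)) := Measure.isProbabilityMeasure_map hms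
        rw [h0, W1dual_comm, W1dual_zero_right]
        exact hb0
      · have h0' : fin.map (Z ε s) = 0 := Measure.map_of_not_aemeasurable hms
        rw [h0, h0', W1dual_zero_zero]
        exact hb0
  intro ε hε hεA t ht s hs
  rcases le_total s t with h | h
  · have := key ε hε hεA s t hs h
    rwa [abs_of_nonneg (by linarith : (0:ℝ) ≤ t - s)]
  · have := key ε hε hεA t s ht h
    rw [abs_sub_comm, abs_of_nonneg (by linarith : (0:ℝ) ≤ s - t), W1dual_comm]
    exact this
end

section
/- Let U ∈ C²_b(ℝ^d) and h ∈ C¹_b(ℝ^d), and for a Borel probability measure f on ℝ^d × ℝ^d define a_f(x, v) = −∫ ∇U(x − x′) df(x′, v′) − ∫ h(x − x′)(v − v′) df(x′, v′). Let f, g be Borel probability measures on ℝ^d × ℝ^d supported in {(x, v) : |x| ≤ L, |v| ≤ R} for some L, R > 0. Then for every coupling π of f and g (i.e. every Borel probability measure on (ℝ^d × ℝ^d)² whose first and second marginals are f and g respectively), sup{|a_f(x, v) − a_g(x, v)| : x ∈ ℝ^d, |v| ≤ R} ≤ ( ‖∇²_x U‖_{L∞} + (‖h‖_{L∞}² + 4R²‖∇_x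 h‖_{L∞}²)^{1/2} ) ∫ |(x′, v′) − (x″, v″)| dπ((x′, v′), (x″, v″)). In particular, a_f − a_g is bounded on ℝ^d × B_R by the same constant times W₁(f, g). -/
set_option maxHeartbeats 1000000


open MeasureTheory Real Set

/-- The interaction acceleration field
`a_f(x, v) = −∫ ∇U(x − x′) df(x′, v′) − ∫ h(x − x′)(v − v′) df(x′, v′)`. -/
noncomputable def accelField {d : ℕ} (U h : EuclideanSpace ℝ (Fin d) → ℝ)
    (f : Measure (EuclideanSpace ℝ (Fin d) × EuclideanSpace ℝ (Fin d)))
    (x v : EuclideanSpace ℝ (Fin d)) : EuclideanSpace ℝ (Fin d) :=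
  -∫ q, (gradient U (x - q.1) + h (x - q.1) • (v - q.2)) ∂f

/-- Euclidean transportation cost on pairs of phase-space points,
`|(x′,v′) − (x″,v″)| = √(|x′−x″|² + |v′−v″|²)`. -/
noncomputable def phaseCost {d : ℕ}
    (q : (EuclideanSpace ℝ (Fin d) × EuclideanSpace ℝ (Fin d)) ×
         (EuclideanSpace ℝ (Fin d) × EuclideanSpace ℝ (Fin d))) : ℝ :=
  Real.sqrt (‖q.1.1 - q.2.1‖ ^ 2 + ‖q.1.2 - q.2.2‖ ^ 2)

/-- The Monge–Kantorovich–Rubinstein distance `W₁`, realized as the infimum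
over couplings of the integrated transportation cost. -/
noncomputable def W1coupling {d : ℕ}
    (f g : Measure (EuclideanSpace ℝ (Fin d) × EuclideanSpace ℝ (Fin d))) : ℝ :=
  sInf {c | ∃ plan : Measure ((EuclideanSpace ℝ (Fin d) × EuclideanSpace ℝ (Fin d)) ×
      (EuclideanSpace ℝ (Fin d) × EuclideanSpace ℝ (Fin d))),
    IsProbabilityMeasure plan ∧ plan.map Prod.fst = f ∧ plan.map Prod.snd = g ∧
    c = ∫ q, phaseCost q ∂plan}

instance aux_borel (d : ℕ) :
    BorelSpace (EuclideanSpace ℝ (Fin d) × EuclideanSpace ℝ (Fin d)) := Prod.borelSpace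

/-- The gradient of a `C²` function is differentiable. -/
lemma aux_grad_diff {d : ℕ} {U : EuclideanSpace ℝ (Fin d) → ℝ} (hU : ContDiff ℝ 2 U) :
    Differentiable ℝ (fun y => gradient U y) := by
  have h1 : ContDiff ℝ 1 (fderiv ℝ U) := hU.fderiv_right (m := 1) (by norm_num)
  have h2 : Differentiable ℝ (fderiv ℝ U) := h1.differentiable one_ne_zero
  have h3 : Differentiable ℝ
      (fun w : (EuclideanSpace ℝ (Fin d)) →L[ℝ] ℝ =>
        (InnerProductSpace.toDual ℝ (EuclideanSpace ℝ (Fin d))).symm w) :=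
    (InnerProductSpace.toDual ℝ
      (EuclideanSpace ℝ (Fin d))).symm.toContinuousLinearEquiv.toContinuousLinearMap.differentiable
  exact h3.comp h2

/-- Lipschitz bound for the gradient of a `C²` function with bounded Hessian. -/
lemma aux_grad_lip {d : ℕ} {U : EuclideanSpace ℝ (Fin d) → ℝ} (hU : ContDiff ℝ 2 U) {C : ℝ}
    (hC : ∀ x, ‖fderiv ℝ (fun y => gradient U y) x‖ ≤ C)
    (a b : EuclideanSpace ℝ (Fin d)) :
    ‖gradient U a - gradient U b‖ ≤ C * ‖a - b‖ :=
  Convex.norm_image_sub_le_of_norm_fderiv_le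
    (fun x _ => (aux_grad_diff hU) x) (fun x _ => hC x) convex_univ (mem_univ b) (mem_univ a)

/-- Lipschitz bound for a `C¹` function with bounded gradient. -/
lemma aux_h_lip {d : ℕ} {h : EuclideanSpace ℝ (Fin d) → ℝ} (hh : ContDiff ℝ 1 h) {C : ℝ}
    (hC : ∀ x, ‖gradient h x‖ ≤ C) (a b : EuclideanSpace ℝ (Fin d)) :
    ‖h a - h b‖ ≤ C * ‖a - b‖ := by
  have hb : ∀ x, ‖fderiv ℝ h x‖ ≤ C := by
    intro x
    have e : ‖gradient h x‖ = ‖fderiv ℝ h x‖ :=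
      (InnerProductSpace.toDual ℝ (EuclideanSpace ℝ (Fin d))).symm.norm_map (fderiv ℝ h x)
    rw [← e]; exact hC x
  exact Convex.norm_image_sub_le_of_norm_fderiv_le
    (fun x _ => (hh.differentiable one_ne_zero) x) (fun x _ => hb x) convex_univ
    (mem_univ b) (mem_univ a)

/-- Let `U ∈ C²_b(ℝ^d)` and `h ∈ C¹_b(ℝ^d)`, with `CU2`
bounding `‖∇²U‖`, `Ch` bounding `|h|` and `Ch1` bounding `‖∇h‖`. If `f, g` are
Borel probability measures supported in `{|x| ≤ L, |v| ≤ R}`, then for every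
coupling `plan` of `f` and `g`,
`sup_{x, |v| ≤ R} |a_f(x,v) − a_g(x,v)|
   ≤ (CU2 + √(Ch² + 4R²Ch1²)) ∫ |(x′,v′) − (x″,v″)| dplan`,
and in particular the same bound holds with `W₁(f,g)` in place of the
transport cost of `plan`. -/
theorem stmt17 (d : ℕ) (L R : ℝ) (hL : 0 < L) (hR : 0 < R)
    (U h : EuclideanSpace ℝ (Fin d) → ℝ)
    (hU : ContDiff ℝ 2 U) (hh : ContDiff ℝ 1 h)
    (CU CU1 CU2 Ch Ch1 : ℝ)
    (hUb : ∀ x, |U x| ≤ CU) (hU1b : ∀ x, ‖gradient U x‖ ≤ CU1)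
    (hU2b : ∀ x, ‖fderiv ℝ (fun y => gradient U y) x‖ ≤ CU2)
    (hhb : ∀ x, |h x| ≤ Ch) (hh1b : ∀ x, ‖gradient h x‖ ≤ Ch1)
    (f g : Measure (EuclideanSpace ℝ (Fin d) × EuclideanSpace ℝ (Fin d)))
    [IsProbabilityMeasure f] [IsProbabilityMeasure g]
    (hfsupp : f ({p | ‖p.1‖ ≤ L ∧ ‖p.2‖ ≤ R}ᶜ) = 0)
    (hgsupp : g ({p | ‖p.1‖ ≤ L ∧ ‖p.2‖ ≤ R}ᶜ) = 0) :
    (∀ plan : Measure ((EuclideanSpace ℝ (Fin d) × EuclideanSpace ℝ (Fin d)) ×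
        (EuclideanSpace ℝ (Fin d) × EuclideanSpace ℝ (Fin d))),
      IsProbabilityMeasure plan → plan.map Prod.fst = f → plan.map Prod.snd = g →
      ∀ x v : EuclideanSpace ℝ (Fin d), ‖v‖ ≤ R →
        ‖accelField U h f x v - accelField U h g x v‖ ≤
          (CU2 + Real.sqrt (Ch ^ 2 + 4 * R ^ 2 * Ch1 ^ 2)) *
            ∫ q, phaseCost q ∂plan) ∧
    (∀ x v : EuclideanSpace ℝ (Fin d), ‖v‖ ≤ R →
      ‖accelField U h f x v - accelField U h g x v‖ ≤
        (CU2 + Real.sqrt (Ch ^ 2 + 4 * R ^ 2 * Ch1 ^ 2)) * W1coupling f g) := by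
  have hCU2 : 0 ≤ CU2 := le_trans (norm_nonneg _) (hU2b 0)
  have hCh : 0 ≤ Ch := le_trans (abs_nonneg _) (hhb 0)
  have hCh1 : 0 ≤ Ch1 := le_trans (norm_nonneg _) (hh1b 0)
  have hs0 : 0 ≤ Real.sqrt (Ch ^ 2 + 4 * R ^ 2 * Ch1 ^ 2) := Real.sqrt_nonneg _
  have hs2 : Real.sqrt (Ch ^ 2 + 4 * R ^ 2 * Ch1 ^ 2) ^ 2 = Ch ^ 2 + 4 * R ^ 2 * Ch1 ^ 2 :=
    Real.sq_sqrt (by positivity)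
  set K := CU2 + Real.sqrt (Ch ^ 2 + 4 * R ^ 2 * Ch1 ^ 2) with hK
  have hK0 : 0 ≤ K := add_nonneg hCU2 hs0
  have hgradcont : Continuous (fun y => gradient U y) := (aux_grad_diff hU).continuous
  have hSm : MeasurableSet {p : (EuclideanSpace ℝ (Fin d) × EuclideanSpace ℝ (Fin d)) | ‖p.1‖ ≤ L ∧ ‖p.2‖ ≤ R} :=
    (measurableSet_le measurable_fst.norm measurable_const).inter
      (measurableSet_le measurable_snd.norm measurable_const)
  have hphcont : Continuous (phaseCost (d := d)) := by
    unfold phaseCost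
    fun_prop
  have hmain : ∀ plan : Measure ((EuclideanSpace ℝ (Fin d) × EuclideanSpace ℝ (Fin d)) × (EuclideanSpace ℝ (Fin d) × EuclideanSpace ℝ (Fin d))),
      IsProbabilityMeasure plan → plan.map Prod.fst = f → plan.map Prod.snd = g →
      ∀ x v : EuclideanSpace ℝ (Fin d), ‖v‖ ≤ R →
        ‖accelField U h f x v - accelField U h g x v‖ ≤ K * ∫ q, phaseCost q ∂plan := by
    intro plan hplan h1 h2 x v hv
    set φ : (EuclideanSpace ℝ (Fin d) × EuclideanSpace ℝ (Fin d)) → EuclideanSpace ℝ (Fin d) := fun q => gradient U (x - q.1) + h (x - q.1) • (v - q.2) with hφ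
    have hφcont : Continuous φ := by
      apply Continuous.add
      · exact hgradcont.comp (continuous_const.sub continuous_fst)
      · exact ((hh.continuous.comp (continuous_const.sub continuous_fst))).smul
          (continuous_const.sub continuous_snd)
    have hae1 : ∀ᵐ q : (EuclideanSpace ℝ (Fin d) × EuclideanSpace ℝ (Fin d)) × (EuclideanSpace ℝ (Fin d) × EuclideanSpace ℝ (Fin d)) ∂plan, ‖q.1.1‖ ≤ L ∧ ‖q.1.2‖ ≤ R := by
      rw [ae_iff]
      have heq : {q : (EuclideanSpace ℝ (Fin d) × EuclideanSpace ℝ (Fin d)) × (EuclideanSpace ℝ (Fin d) × EuclideanSpace ℝ (Fin d)) | ¬(‖q.1.1‖ ≤ L ∧ ‖q.1.2‖ ≤ R)} =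
          Prod.fst ⁻¹' ({p : (EuclideanSpace ℝ (Fin d) × EuclideanSpace ℝ (Fin d)) | ‖p.1‖ ≤ L ∧ ‖p.2‖ ≤ R}ᶜ) := rfl
      rw [heq, ← Measure.map_apply measurable_fst hSm.compl, h1, hfsupp]
    have hae2 : ∀ᵐ q : (EuclideanSpace ℝ (Fin d) × EuclideanSpace ℝ (Fin d)) × (EuclideanSpace ℝ (Fin d) × EuclideanSpace ℝ (Fin d)) ∂plan, ‖q.2.1‖ ≤ L ∧ ‖q.2.2‖ ≤ R := by
      rw [ae_iff]
      have heq : {q : (EuclideanSpace ℝ (Fin d) × EuclideanSpace ℝ (Fin d)) × (EuclideanSpace ℝ (Fin d) × EuclideanSpace ℝ (Fin d)) | ¬(‖q.2.1‖ ≤ L ∧ ‖q.2.2‖ ≤ R)} =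
          Prod.snd ⁻¹' ({p : (EuclideanSpace ℝ (Fin d) × EuclideanSpace ℝ (Fin d)) | ‖p.1‖ ≤ L ∧ ‖p.2‖ ≤ R}ᶜ) := rfl
      rw [heq, ← Measure.map_apply measurable_snd hSm.compl, h2, hgsupp]
    have hφbound : ∀ p : (EuclideanSpace ℝ (Fin d) × EuclideanSpace ℝ (Fin d)), ‖p.2‖ ≤ R → ‖φ p‖ ≤ CU1 + Ch * (2 * R) := by
      intro p hp
      calc ‖φ p‖ ≤ ‖gradient U (x - p.1)‖ + ‖h (x - p.1) • (v - p.2)‖ := norm_add_le _ _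
        _ ≤ CU1 + Ch * (2 * R) := by
            have e1 := hU1b (x - p.1)
            have e2 : ‖h (x - p.1) • (v - p.2)‖ ≤ Ch * (2 * R) := by
              rw [norm_smul, Real.norm_eq_abs]
              have e3 : ‖v - p.2‖ ≤ 2 * R := (norm_sub_le _ _).trans (by linarith)
              exact mul_le_mul (hhb _) e3 (norm_nonneg _) hCh
            linarith
    have Iφ1 : Integrable (fun q : (EuclideanSpace ℝ (Fin d) × EuclideanSpace ℝ (Fin d)) × (EuclideanSpace ℝ (Fin d) × EuclideanSpace ℝ (Fin d)) => φ q.1) plan := by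
      refine Integrable.mono' (integrable_const (CU1 + Ch * (2 * R)))
        ((hφcont.comp continuous_fst).aestronglyMeasurable) ?_
      filter_upwards [hae1] with q hq using hφbound q.1 hq.2
    have Iφ2 : Integrable (fun q : (EuclideanSpace ℝ (Fin d) × EuclideanSpace ℝ (Fin d)) × (EuclideanSpace ℝ (Fin d) × EuclideanSpace ℝ (Fin d)) => φ q.2) plan := by
      refine Integrable.mono' (integrable_const (CU1 + Ch * (2 * R)))
        ((hφcont.comp continuous_snd).aestronglyMeasurable) ?_
      filter_upwards [hae2] with q hq using hφbound q.2 hq.2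
    have Iphase : Integrable (phaseCost (d := d)) plan := by
      refine Integrable.mono' (integrable_const (Real.sqrt ((2 * L) ^ 2 + (2 * R) ^ 2)))
        hphcont.aestronglyMeasurable ?_
      filter_upwards [hae1, hae2] with q hq1 hq2
      have h0 : 0 ≤ phaseCost q := Real.sqrt_nonneg _
      rw [Real.norm_eq_abs, abs_of_nonneg h0]
      have e1 : ‖q.1.1 - q.2.1‖ ≤ 2 * L := (norm_sub_le _ _).trans (by linarith [hq1.1, hq2.1])
      have e2 : ‖q.1.2 - q.2.2‖ ≤ 2 * R := (norm_sub_le _ _).trans (by linarith [hq1.2, hq2.2])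
      refine Real.sqrt_le_sqrt ?_
      nlinarith [norm_nonneg (q.1.1 - q.2.1), norm_nonneg (q.1.2 - q.2.2)]
    have e1 : (∫ q, φ q ∂f) = ∫ q, φ q.1 ∂plan := by
      rw [← h1]; exact integral_map measurable_fst.aemeasurable hφcont.aestronglyMeasurable
    have e2 : (∫ q, φ q ∂g) = ∫ q, φ q.2 ∂plan := by
      rw [← h2]; exact integral_map measurable_snd.aemeasurable hφcont.aestronglyMeasurable
    have key : accelField U h f x v - accelField U h g x v = ∫ q, (φ q.2 - φ q.1) ∂plan := by
      have hf' : accelField U h f x v = -∫ q, φ q ∂f := rfl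
      have hg' : accelField U h g x v = -∫ q, φ q ∂g := rfl
      rw [hf', hg', e1, e2, neg_sub_neg, ← integral_sub Iφ2 Iφ1]
    have hptw : ∀ᵐ q : (EuclideanSpace ℝ (Fin d) × EuclideanSpace ℝ (Fin d)) × (EuclideanSpace ℝ (Fin d) × EuclideanSpace ℝ (Fin d)) ∂plan, ‖φ q.2 - φ q.1‖ ≤ K * phaseCost q := by
      filter_upwards [hae1, hae2] with q hq1 hq2
      obtain ⟨hx1, hv1⟩ := hq1
      obtain ⟨hx2, hv2⟩ := hq2
      set a := ‖q.1.1 - q.2.1‖ with ha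
      set b := ‖q.1.2 - q.2.2‖ with hb
      have ha0 : 0 ≤ a := norm_nonneg _
      have hb0 : 0 ≤ b := norm_nonneg _
      have ht0 : 0 ≤ phaseCost q := Real.sqrt_nonneg _
      have ht2 : phaseCost q ^ 2 = a ^ 2 + b ^ 2 := Real.sq_sqrt (by positivity)
      have hbg : ‖gradient U (x - q.2.1) - gradient U (x - q.1.1)‖ ≤ CU2 * a := by
        calc ‖gradient U (x - q.2.1) - gradient U (x - q.1.1)‖
            ≤ CU2 * ‖(x - q.2.1) - (x - q.1.1)‖ := aux_grad_lip hU hU2b _ _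
          _ = CU2 * a := by rw [show (x - q.2.1) - (x - q.1.1) = q.1.1 - q.2.1 by abel]
      have hbh : ‖h (x - q.2.1) • (v - q.2.2) - h (x - q.1.1) • (v - q.1.2)‖
          ≤ Ch * b + 2 * R * Ch1 * a := by
        have decomp : h (x - q.2.1) • (v - q.2.2) - h (x - q.1.1) • (v - q.1.2)
            = h (x - q.2.1) • (q.1.2 - q.2.2) + (h (x - q.2.1) - h (x - q.1.1)) • (v - q.1.2) := by
          simp only [smul_sub, sub_smul]
          abel
        rw [decomp]
        refine (norm_add_le _ _).trans ?_
        have t1 : ‖h (x - q.2.1) • (q.1.2 - q.2.2)‖ ≤ Ch * b := by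
          rw [norm_smul, Real.norm_eq_abs]
          exact mul_le_mul_of_nonneg_right (hhb _) hb0
        have t2 : ‖(h (x - q.2.1) - h (x - q.1.1)) • (v - q.1.2)‖ ≤ 2 * R * Ch1 * a := by
          rw [norm_smul]
          have u1 : ‖h (x - q.2.1) - h (x - q.1.1)‖ ≤ Ch1 * a := by
            calc ‖h (x - q.2.1) - h (x - q.1.1)‖
                ≤ Ch1 * ‖(x - q.2.1) - (x - q.1.1)‖ := aux_h_lip hh hh1b _ _
              _ = Ch1 * a := by rw [show (x - q.2.1) - (x - q.1.1) = q.1.1 - q.2.1 by abel]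
          have u2 : ‖v - q.1.2‖ ≤ 2 * R := (norm_sub_le _ _).trans (by linarith)
          calc ‖h (x - q.2.1) - h (x - q.1.1)‖ * ‖v - q.1.2‖
              ≤ (Ch1 * a) * (2 * R) :=
                mul_le_mul u1 u2 (norm_nonneg _) (mul_nonneg hCh1 ha0)
            _ = 2 * R * Ch1 * a := by ring
        linarith
      have htotal : ‖φ q.2 - φ q.1‖ ≤ CU2 * a + (Ch * b + 2 * R * Ch1 * a) := by
        have edec : φ q.2 - φ q.1
            = (gradient U (x - q.2.1) - gradient U (x - q.1.1))
              + (h (x - q.2.1) • (v - q.2.2) - h (x - q.1.1) • (v - q.1.2)) := by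
          simp only [hφ]
          abel
        rw [edec]
        exact (norm_add_le _ _).trans (by linarith)
      have hat : a ≤ phaseCost q := by
        calc a = Real.sqrt (a ^ 2) := (Real.sqrt_sq ha0).symm
          _ ≤ Real.sqrt (a ^ 2 + b ^ 2) := Real.sqrt_le_sqrt (by nlinarith)
          _ = phaseCost q := rfl
      have hX0 : 0 ≤ Ch * b + 2 * R * Ch1 * a := by positivity
      have key2 : (Ch * b + 2 * R * Ch1 * a) ^ 2
          ≤ (Real.sqrt (Ch ^ 2 + 4 * R ^ 2 * Ch1 ^ 2) * phaseCost q) ^ 2 := by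
        have e : (Real.sqrt (Ch ^ 2 + 4 * R ^ 2 * Ch1 ^ 2) * phaseCost q) ^ 2
            = (Ch ^ 2 + 4 * R ^ 2 * Ch1 ^ 2) * (a ^ 2 + b ^ 2) := by
          rw [mul_pow, hs2, ht2]
        rw [e]
        nlinarith [sq_nonneg (Ch * a - 2 * R * Ch1 * b)]
      have hcs : Ch * b + 2 * R * Ch1 * a
          ≤ Real.sqrt (Ch ^ 2 + 4 * R ^ 2 * Ch1 ^ 2) * phaseCost q := by
        calc Ch * b + 2 * R * Ch1 * a
            = Real.sqrt ((Ch * b + 2 * R * Ch1 * a) ^ 2) := (Real.sqrt_sq hX0).symm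
          _ ≤ Real.sqrt ((Real.sqrt (Ch ^ 2 + 4 * R ^ 2 * Ch1 ^ 2) * phaseCost q) ^ 2) :=
              Real.sqrt_le_sqrt key2
          _ = Real.sqrt (Ch ^ 2 + 4 * R ^ 2 * Ch1 ^ 2) * phaseCost q :=
              Real.sqrt_sq (mul_nonneg hs0 ht0)
      calc ‖φ q.2 - φ q.1‖ ≤ CU2 * a + (Ch * b + 2 * R * Ch1 * a) := htotal
        _ ≤ CU2 * phaseCost q + Real.sqrt (Ch ^ 2 + 4 * R ^ 2 * Ch1 ^ 2) * phaseCost q :=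
            add_le_add (mul_le_mul_of_nonneg_left hat hCU2) hcs
        _ = K * phaseCost q := by rw [hK]; ring
    rw [key]
    calc ‖∫ q, (φ q.2 - φ q.1) ∂plan‖ ≤ ∫ q, ‖φ q.2 - φ q.1‖ ∂plan :=
        norm_integral_le_integral_norm _
      _ ≤ ∫ q, K * phaseCost q ∂plan :=
          integral_mono_ae (Iφ2.sub Iφ1).norm (Iphase.const_mul K) hptw
      _ = K * ∫ q, phaseCost q ∂plan := integral_const_mul K _
  refine ⟨hmain, ?_⟩
  intro x v hv
  have hmem : (∫ q, phaseCost q ∂(f.prod g)) ∈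
      {c | ∃ plan : Measure ((EuclideanSpace ℝ (Fin d) × EuclideanSpace ℝ (Fin d)) × (EuclideanSpace ℝ (Fin d) × EuclideanSpace ℝ (Fin d))),
        IsProbabilityMeasure plan ∧ plan.map Prod.fst = f ∧ plan.map Prod.snd = g ∧
        c = ∫ q, phaseCost q ∂plan} :=
    ⟨f.prod g, inferInstance, by simp, by simp, rfl⟩
  rcases eq_or_lt_of_le hK0 with hK0' | hK0'
  · have hb := hmain (f.prod g) inferInstance (by simp) (by simp) x v hv
    rw [← hK0'] at hb ⊢
    simpa using hb
  · have hlb : ∀ c ∈ {c | ∃ plan : Measure ((EuclideanSpace ℝ (Fin d) × EuclideanSpace ℝ (Fin d)) × (EuclideanSpace ℝ (Fin d) × EuclideanSpace ℝ (Fin d))),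
        IsProbabilityMeasure plan ∧ plan.map Prod.fst = f ∧ plan.map Prod.snd = g ∧
        c = ∫ q, phaseCost q ∂plan},
        ‖accelField U h f x v - accelField U h g x v‖ / K ≤ c := by
      rintro c ⟨plan, hp, hpf, hpg, rfl⟩
      rw [div_le_iff₀ hK0']
      calc ‖accelField U h f x v - accelField U h g x v‖
          ≤ K * ∫ q, phaseCost q ∂plan := hmain plan hp hpf hpg x v hv
        _ = (∫ q, phaseCost q ∂plan) * K := mul_comm _ _
    have hinf : ‖accelField U h f x v - accelField U h g x v‖ / K ≤ W1coupling f g :=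
      le_csInf ⟨_, hmem⟩ hlb
    calc ‖accelField U h f x v - accelField U h g x v‖
        = (‖accelField U h f x v - accelField U h g x v‖ / K) * K := by
          field_simp
      _ ≤ W1coupling f g * K := mul_le_mul_of_nonneg_right hinf hK0
      _ = K * W1coupling f g := mul_comm _ _
end
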